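/- arXiv:2006.08856 — 3 statements merged into one kernel-verified Lean document; each statement's English description precedes it below -/
import Mathlib

section
/- Let μ(0) ∈ P(E) be supported in B(0, R₀) ⊂ E and suppose K satisfies (H) with constant L (with linear growth constant C). Then there exists T > 0 depending only on C and R₀ such that for any μ ∈ A_T (curves in C([0,T], P₁(E)) with μ(0) = μ_in and supp μ(t) ⊂ B(0, 2R₀) for all t), the map Γ(μ)(t) := (res[t]∘ext[μ])#μ(0) satisfies supp Γ(μ)(t) ⊂ B(0, 2R₀) for all t ∈ [0,T]. -/
open MeasureTheory Set

noncomputable section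

abbrev Rd (d : ℕ) := EuclideanSpace ℝ (Fin d)

abbrev Hist (τ : ℝ) (d : ℕ) := C(Set.Icc (-τ) (0:ℝ), Rd d)

noncomputable def W1 {X : Type*} [MeasurableSpace X] [PseudoMetricSpace X]
    (μ ν : Measure X) : ℝ :=
  sSup { r | ∃ φ : X → ℝ, LipschitzWith 1 φ ∧ r = (∫ x, φ x ∂μ) - ∫ x, φ x ∂ν }

/-- `G t` is the operator `res[t] ∘ ext[μ]` : it sends a history `σ ∈ E` to the
history at time `t` of the path extending `σ` by the flow `Tf` for positive times. -/
def IsResExt {d : ℕ} (τ : ℝ) (Tf : ℝ → Rd d → Rd d)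
    (G : ℝ → Hist τ d → Hist τ d) : Prop :=
  ∀ t : ℝ, 0 ≤ t → ∀ σ : Hist τ d, ∀ s : Set.Icc (-τ) (0:ℝ),
    (∀ s' : Set.Icc (-τ) (0:ℝ), (s':ℝ) = t + (s:ℝ) → G t σ s = σ s') ∧
    (0 < t + (s:ℝ) → ∀ z : Set.Icc (-τ) (0:ℝ), (z:ℝ) = 0 →
      G t σ s = Tf (t + (s:ℝ)) (σ z))


theorem stmt10 {d : ℕ} (τ R₀ C : ℝ) (hτ : 0 < τ) (hR : 0 < R₀)
    [MeasurableSpace (Hist τ d)] [BorelSpace (Hist τ d)]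
    (K : Rd d → Hist τ d → Rd d)
    (hgrowth : ∀ x σ, ‖K x σ‖ ≤ C * (1 + ‖x‖ + ‖σ‖))
    (μin : Measure (Hist τ d)) [IsProbabilityMeasure μin]
    (hμin : μin (Metric.closedBall (0 : Hist τ d) R₀)ᶜ = 0) :
    ∃ T : ℝ, 0 < T ∧
      ∀ (μ : ℝ → Measure (Hist τ d)) (Tf : ℝ → Rd d → Rd d)
        (G : ℝ → Hist τ d → Hist τ d),
        (∀ t, IsProbabilityMeasure (μ t)) → μ 0 = μin →
        (∀ t ∈ Set.Icc (0:ℝ) T,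
          (μ t) (Metric.closedBall (0 : Hist τ d) (2*R₀))ᶜ = 0) →
        (∀ t x, Integrable (fun σ => K x σ) (μ t)) →
        (∀ x, Tf 0 x = x) →
        (∀ x, ∀ t ∈ Set.Icc (0:ℝ) T,
          HasDerivWithinAt (fun s => Tf s x) (∫ σ, K (Tf t x) σ ∂(μ t))
            (Set.Icc (0:ℝ) T) t) →
        IsResExt τ Tf G →
        (∀ t, Measurable (G t)) →
        ∀ t ∈ Set.Icc (0:ℝ) T,
          (μin.map (G t)) (Metric.closedBall (0 : Hist τ d) (2*R₀))ᶜ = 0 := by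
  have hC0 : 0 ≤ C := by
    have h := hgrowth 0 0
    have h1 : (0:ℝ) ≤ ‖K (0 : Rd d) (0 : Hist τ d)‖ := norm_nonneg _
    nlinarith [norm_nonneg (0 : Rd d), norm_nonneg (0 : Hist τ d)]
  set C₁ : ℝ := max C 1 with hC₁def
  have hC₁pos : 0 < C₁ := lt_of_lt_of_le one_pos (le_max_right _ _)
  have hCle : C ≤ C₁ := le_max_left _ _
  have hratio : 1 < (1 + 4*R₀) / (1 + 3*R₀) := by
    rw [lt_div_iff₀ (by linarith)]; linarith
  refine ⟨Real.log ((1 + 4*R₀) / (1 + 3*R₀)) / C₁,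
    div_pos (Real.log_pos hratio) hC₁pos, ?_⟩
  set T : ℝ := Real.log ((1 + 4*R₀) / (1 + 3*R₀)) / C₁ with hTdef
  intro μ Tf G hprob hμ0 hsupp hint hTf0 hderiv hres hGmeas t ht
  -- Grönwall bound on the flow
  have key : ∀ x : Rd d, ‖x‖ ≤ R₀ → ∀ u ∈ Icc (0:ℝ) T, ‖Tf u x‖ ≤ 2 * R₀ := by
    intro x hx u hu
    have hcont : ContinuousOn (fun s => Tf s x) (Icc (0:ℝ) T) := fun s hs =>
      (hderiv x s hs).continuousWithinAt
    have hderiv' : ∀ s ∈ Ico (0:ℝ) T,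
        HasDerivWithinAt (fun s => Tf s x) (∫ σ, K (Tf s x) σ ∂(μ s)) (Ici s) s := by
      intro s hs
      exact (hderiv x s (Ico_subset_Icc_self hs)).mono_of_mem_nhdsWithin
        (Icc_mem_nhdsGE_of_mem hs)
    have hbd : ∀ s ∈ Ico (0:ℝ) T,
        ‖∫ σ, K (Tf s x) σ ∂(μ s)‖ ≤ C₁ * ‖Tf s x‖ + C₁ * (1 + 2*R₀) := by
      intro s hs
      have hae : ∀ᵐ σ ∂(μ s), ‖K (Tf s x) σ‖ ≤ C * (1 + ‖Tf s x‖ + 2*R₀) := by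
        have h0 := hsupp s (Ico_subset_Icc_self hs)
        have : ∀ᵐ σ ∂(μ s), σ ∈ Metric.closedBall (0 : Hist τ d) (2*R₀) := by
          rw [ae_iff]
          exact h0
        filter_upwards [this] with σ hσ
        have hσn : ‖σ‖ ≤ 2*R₀ := by simpa using hσ
        calc ‖K (Tf s x) σ‖ ≤ C * (1 + ‖Tf s x‖ + ‖σ‖) := hgrowth _ _
          _ ≤ C * (1 + ‖Tf s x‖ + 2*R₀) := by nlinarith
      haveI := hprob s
      have hI := norm_integral_le_of_norm_le (integrable_const (C * (1 + ‖Tf s x‖ + 2*R₀))) hae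
      rw [integral_const, probReal_univ] at hI
      simp only [ENNReal.toReal_one, one_smul, smul_eq_mul] at hI
      have hn : (0:ℝ) ≤ ‖Tf s x‖ := norm_nonneg _
      nlinarith [hI]
    have := norm_le_gronwallBound_of_norm_deriv_right_le hcont hderiv'
      (by simpa [hTf0] using hx) hbd u hu
    refine le_trans this ?_
    rw [gronwallBound_of_K_ne_0 (ne_of_gt hC₁pos)]
    simp only
    rw [mul_div_cancel_left₀ _ (ne_of_gt hC₁pos)]
    have hexp : Real.exp (C₁ * (u - 0)) ≤ (1 + 4*R₀) / (1 + 3*R₀) := by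
      have h1 : C₁ * (u - 0) ≤ Real.log ((1 + 4*R₀) / (1 + 3*R₀)) := by
        have := hu.2
        rw [hTdef, le_div_iff₀ hC₁pos] at this
        nlinarith
      calc Real.exp (C₁ * (u - 0)) ≤ Real.exp (Real.log ((1 + 4*R₀) / (1 + 3*R₀))) :=
            Real.exp_le_exp.mpr h1
        _ = (1 + 4*R₀) / (1 + 3*R₀) := Real.exp_log (by positivity)
    have hep : (0:ℝ) < Real.exp (C₁ * (u - 0)) := Real.exp_pos _
    have hkey : (1 + 3*R₀) * Real.exp (C₁ * (u - 0)) ≤ 1 + 4*R₀ := by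
      rw [← le_div_iff₀' (by linarith : (0:ℝ) < 1 + 3*R₀)]
      exact hexp
    nlinarith
  -- pointwise bound on G t σ
  have hG : ∀ σ : Hist τ d, σ ∈ Metric.closedBall (0 : Hist τ d) R₀ →
      G t σ ∈ Metric.closedBall (0 : Hist τ d) (2*R₀) := by
    intro σ hσ
    have hσn : ‖σ‖ ≤ R₀ := by simpa using hσ
    rw [Metric.mem_closedBall, dist_zero_right]
    rw [ContinuousMap.norm_le _ (by linarith)]
    intro s
    rcases le_or_gt (t + (s:ℝ)) 0 with hts | hts
    · have hmem : t + (s:ℝ) ∈ Icc (-τ) (0:ℝ) := by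
        constructor
        · have := s.2.1; linarith [ht.1]
        · exact hts
      have := (hres t ht.1 σ s).1 ⟨t + (s:ℝ), hmem⟩ rfl
      rw [this]
      calc ‖σ ⟨t + (s:ℝ), hmem⟩‖ ≤ ‖σ‖ := σ.norm_coe_le_norm _
        _ ≤ 2 * R₀ := by linarith
    · have hz : (0:ℝ) ∈ Icc (-τ) (0:ℝ) := ⟨by linarith, le_refl _⟩
      have := (hres t ht.1 σ s).2 hts ⟨0, hz⟩ rfl
      rw [this]
      have hx0 : ‖σ ⟨0, hz⟩‖ ≤ R₀ := le_trans (σ.norm_coe_le_norm _) hσn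
      refine key (σ ⟨0, hz⟩) hx0 (t + (s:ℝ)) ⟨le_of_lt hts, ?_⟩
      have := s.2.2
      linarith [ht.2]
  -- conclude
  have hmeas : MeasurableSet (Metric.closedBall (0 : Hist τ d) (2*R₀))ᶜ :=
    Metric.isClosed_closedBall.measurableSet.compl
  rw [Measure.map_apply (hGmeas t) hmeas]
  refine measure_mono_null ?_ hμin
  intro σ hσ
  simp only [mem_compl_iff, mem_preimage] at hσ ⊢
  intro hmem
  exact hσ (hG σ hmem)
end
end

section
/- Continuous dependence on initial data for the delayed mean-field dynamics: let μ_in, ν_in ∈ P(E) be supported in B(0,R₀), and let μ(t), ν(t) for t ≥ 0 be the unique solutions of the fixed-point equations μ(t) = (res[t]∘ext[μ])#μ_in and ν(t) = (res[t]∘ext[ν])#ν_in. Then W₁(μ(t), ν(t)) ≤ e^{Lt} W₁(μ_in, ν_in) + L e^{Lt} ∫₀ᵗ W₁(μ(r), ν(r)) dr, and consequently, by Gronwall, W₁(μ(t), ν(t)) ≤ r(t) W₁(μ_in, ν_in) for an explicit continuous increasing function r with r(0) = 1. -/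
open MeasureTheory Set

noncomputable section

variable {X : Type*} [MeasurableSpace X] [NormedAddCommGroup X] [OpensMeasurableSpace X]

lemma W1_zero_mem (μ ν : Measure X) :
    (0:ℝ) ∈ { r | ∃ φ : X → ℝ, LipschitzWith 1 φ ∧ r = (∫ x, φ x ∂μ) - ∫ x, φ x ∂ν } :=
  ⟨fun _ => 0, LipschitzWith.const' 0, by simp⟩

lemma W1_nonneg (μ ν : Measure X) : 0 ≤ W1 μ ν := by
  by_cases h : BddAbove { r | ∃ φ : X → ℝ, LipschitzWith 1 φ ∧ r = (∫ x, φ x ∂μ) - ∫ x, φ x ∂ν }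
  · exact le_csSup h (W1_zero_mem μ ν)
  · unfold W1; rw [Real.sSup_of_not_bddAbove h]

lemma ae_norm_le {μ : Measure X} {R : ℝ} (hsupp : μ (Metric.closedBall 0 R)ᶜ = 0) :
    ∀ᵐ x ∂μ, ‖x‖ ≤ R := by
  rw [ae_iff]
  convert hsupp using 2
  ext x
  simp [mem_closedBall_zero_iff]

lemma lip_integrable {μ : Measure X} [IsProbabilityMeasure μ] {R : ℝ}
    (hsupp : μ (Metric.closedBall 0 R)ᶜ = 0) {φ : X → ℝ} {c : NNReal}
    (hφ : LipschitzWith c φ) : Integrable φ μ := by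
  refine Integrable.mono' (integrable_const (|φ 0| + c * R)) hφ.continuous.aestronglyMeasurable ?_
  filter_upwards [ae_norm_le hsupp] with x hx
  have h1 : dist (φ x) (φ 0) ≤ c * dist x 0 := hφ.dist_le_mul x 0
  rw [Real.dist_eq, dist_zero_right] at h1
  have : |φ x| ≤ |φ x - φ 0| + |φ 0| := by
    calc |φ x| = |(φ x - φ 0) + φ 0| := by ring_nf
    _ ≤ |φ x - φ 0| + |φ 0| := abs_add_le _ _
  have h2 : (c:ℝ) * ‖x‖ ≤ c * R := by
    exact mul_le_mul_of_nonneg_left hx c.coe_nonneg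
  simp only [Real.norm_eq_abs]
  linarith

lemma integral_sub_phi0 {μ : Measure X} [IsProbabilityMeasure μ] {R : ℝ}
    (hsupp : μ (Metric.closedBall 0 R)ᶜ = 0) {φ : X → ℝ}
    (hφ : LipschitzWith 1 φ) : |(∫ x, φ x ∂μ) - φ 0| ≤ R := by
  have hint := lip_integrable hsupp hφ
  have : (∫ x, φ x ∂μ) - φ 0 = ∫ x, (φ x - φ 0) ∂μ := by
    rw [integral_sub hint (integrable_const _), integral_const]
    simp
  rw [this, ← Real.norm_eq_abs]
  have : ∫ x, R ∂μ = R := by simp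
  rw [← this]
  refine norm_integral_le_of_norm_le (integrable_const _) ?_
  filter_upwards [ae_norm_le hsupp] with x hx
  have h1 : dist (φ x) (φ 0) ≤ 1 * dist x 0 := hφ.dist_le_mul x 0
  rw [Real.dist_eq, dist_zero_right, one_mul] at h1
  simpa [Real.norm_eq_abs] using h1.trans hx

lemma W1_elt_le {μ ν : Measure X} [IsProbabilityMeasure μ] [IsProbabilityMeasure ν] {R : ℝ}
    (hμs : μ (Metric.closedBall 0 R)ᶜ = 0) (hνs : ν (Metric.closedBall 0 R)ᶜ = 0) :
    ∀ r ∈ { r | ∃ φ : X → ℝ, LipschitzWith 1 φ ∧ r = (∫ x, φ x ∂μ) - ∫ x, φ x ∂ν },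
      r ≤ 2 * R := by
  rintro r ⟨φ, hφ, rfl⟩
  have h1 := integral_sub_phi0 hμs hφ
  have h2 := integral_sub_phi0 hνs hφ
  rw [abs_le] at h1 h2
  linarith [h1.2, h2.1]

lemma W1_bddAbove {μ ν : Measure X} [IsProbabilityMeasure μ] [IsProbabilityMeasure ν] {R : ℝ}
    (hμs : μ (Metric.closedBall 0 R)ᶜ = 0) (hνs : ν (Metric.closedBall 0 R)ᶜ = 0) :
    BddAbove { r | ∃ φ : X → ℝ, LipschitzWith 1 φ ∧ r = (∫ x, φ x ∂μ) - ∫ x, φ x ∂ν } :=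
  ⟨2 * R, W1_elt_le hμs hνs⟩

lemma le_W1 {μ ν : Measure X} [IsProbabilityMeasure μ] [IsProbabilityMeasure ν] {R : ℝ}
    (hμs : μ (Metric.closedBall 0 R)ᶜ = 0) (hνs : ν (Metric.closedBall 0 R)ᶜ = 0)
    {φ : X → ℝ} (hφ : LipschitzWith 1 φ) :
    (∫ x, φ x ∂μ) - ∫ x, φ x ∂ν ≤ W1 μ ν :=
  le_csSup (W1_bddAbove hμs hνs) ⟨φ, hφ, rfl⟩

lemma le_W1_scaled {μ ν : Measure X} [IsProbabilityMeasure μ] [IsProbabilityMeasure ν] {R : ℝ}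
    (hμs : μ (Metric.closedBall 0 R)ᶜ = 0) (hνs : ν (Metric.closedBall 0 R)ᶜ = 0)
    {φ : X → ℝ} {c : ℝ} (hc : 0 < c)
    (hφ : ∀ x y, dist (φ x) (φ y) ≤ c * dist x y) :
    (∫ x, φ x ∂μ) - ∫ x, φ x ∂ν ≤ c * W1 μ ν := by
  set ψ : X → ℝ := fun x => c⁻¹ * φ x with hψ
  have hψl : LipschitzWith 1 ψ := by
    apply LipschitzWith.of_dist_le_mul
    intro x y
    have : dist (ψ x) (ψ y) = c⁻¹ * dist (φ x) (φ y) := by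
      rw [Real.dist_eq, Real.dist_eq, hψ]
      rw [← mul_sub, abs_mul, abs_of_pos (inv_pos.2 hc)]
    rw [this]
    rw [NNReal.coe_one, one_mul]
    calc c⁻¹ * dist (φ x) (φ y) ≤ c⁻¹ * (c * dist x y) :=
          mul_le_mul_of_nonneg_left (hφ x y) (inv_pos.2 hc).le
      _ = dist x y := by field_simp
  have key := le_W1 hμs hνs hψl
  have e1 : ∫ x, ψ x ∂μ = c⁻¹ * ∫ x, φ x ∂μ := integral_const_mul _ _
  have e2 : ∫ x, ψ x ∂ν = c⁻¹ * ∫ x, φ x ∂ν := integral_const_mul _ _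
  rw [e1, e2, ← mul_sub] at key
  calc (∫ x, φ x ∂μ) - ∫ x, φ x ∂ν = c * (c⁻¹ * ((∫ x, φ x ∂μ) - ∫ x, φ x ∂ν)) := by
        field_simp
    _ ≤ c * W1 μ ν := mul_le_mul_of_nonneg_left key hc.le

lemma norm_integral_sub_le_W1 {d : ℕ} {μ ν : Measure X}
    [IsProbabilityMeasure μ] [IsProbabilityMeasure ν] {R : ℝ}
    (hμs : μ (Metric.closedBall 0 R)ᶜ = 0) (hνs : ν (Metric.closedBall 0 R)ᶜ = 0)
    {F : X → Rd d} {c : ℝ} (hc : 0 < c)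
    (hF : ∀ x y, ‖F x - F y‖ ≤ c * ‖x - y‖)
    (hFμ : Integrable F μ) (hFν : Integrable F ν) :
    ‖(∫ x, F x ∂μ) - ∫ x, F x ∂ν‖ ≤ c * W1 μ ν := by
  set v := (∫ x, F x ∂μ) - ∫ x, F x ∂ν with hv
  by_cases h0 : v = 0
  · rw [h0, norm_zero]
    exact mul_nonneg hc.le (W1_nonneg μ ν)
  obtain ⟨g, hg1, hg2⟩ := exists_dual_vector ℝ v (norm_ne_zero_iff.2 h0)
  have hgv : g v = ‖v‖ := by simpa using hg2
  have e1 : g (∫ x, F x ∂μ) = ∫ x, g (F x) ∂μ := (g.integral_comp_comm hFμ).symm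
  have e2 : g (∫ x, F x ∂ν) = ∫ x, g (F x) ∂ν := (g.integral_comp_comm hFν).symm
  have key : (∫ x, g (F x) ∂μ) - ∫ x, g (F x) ∂ν ≤ c * W1 μ ν := by
    apply le_W1_scaled hμs hνs hc
    intro x y
    rw [Real.dist_eq, dist_eq_norm]
    calc |g (F x) - g (F y)| = ‖g (F x - F y)‖ := by rw [map_sub]; rfl
      _ ≤ ‖g‖ * ‖F x - F y‖ := g.le_opNorm _
      _ = ‖F x - F y‖ := by rw [hg1, one_mul]
      _ ≤ c * ‖x - y‖ := hF x y
  calc ‖v‖ = g v := hgv.symm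
    _ = (∫ x, g (F x) ∂μ) - ∫ x, g (F x) ∂ν := by rw [hv, map_sub, e1, e2]
    _ ≤ c * W1 μ ν := key

lemma flow_contOn {d : ℕ} {τ : ℝ} (hτ : 0 < τ) {Tf : ℝ → Rd d → Rd d}
    {G : ℝ → Hist τ d → Hist τ d} (hres : IsResExt τ Tf G)
    (hderiv0 : ∀ x : Rd d, ContinuousWithinAt (fun s => Tf s x) (Ici (0:ℝ)) 0)
    (x : Rd d) : ContinuousOn (fun r => Tf r x) (Ici (0:ℝ)) := by
  intro t₀ ht₀
  rcases eq_or_lt_of_le (mem_Ici.1 ht₀) with h | h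
  · rw [← h]; exact hderiv0 x
  · apply ContinuousAt.continuousWithinAt
    obtain ⟨ε, hε, hετ, hεt₀⟩ : ∃ ε : ℝ, 0 < ε ∧ ε ≤ τ ∧ ε ≤ t₀ :=
      ⟨min τ t₀, lt_min hτ h, min_le_left _ _, min_le_right _ _⟩
    obtain ⟨t, htdef⟩ : ∃ t : ℝ, t = t₀ + ε/2 := ⟨_, rfl⟩
    have ht : 0 ≤ t := by linarith
    have hτ0 : (-τ) ≤ (0:ℝ) := by linarith
    set σ : Hist τ d := ContinuousMap.const _ x with hσdef
    have hg : Continuous (fun r => G t σ (projIcc (-τ) 0 hτ0 (r - t))) :=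
      (G t σ).continuous.comp (continuous_projIcc.comp (continuous_id.sub continuous_const))
    have hnb : Ioo (t₀ - ε/2) (t₀ + ε/2) ∈ nhds t₀ :=
      Ioo_mem_nhds (by linarith) (by linarith)
    have heq : ∀ r ∈ Ioo (t₀ - ε/2) (t₀ + ε/2),
        Tf r x = G t σ (projIcc (-τ) 0 hτ0 (r - t)) := by
      intro r hr
      simp only [mem_Ioo] at hr
      obtain ⟨hra, hrb⟩ := hr
      have hmem : r - t ∈ Icc (-τ) (0:ℝ) := ⟨by linarith, by linarith⟩
      obtain ⟨h1, h2⟩ := hres t ht σ ⟨r - t, hmem⟩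
      have hz : ((⟨0, ⟨by linarith, le_refl 0⟩⟩ : Icc (-τ) (0:ℝ)) : ℝ) = 0 := rfl
      have key := h2 (by simp only; linarith) _ hz
      have hσ0 : σ (⟨0, ⟨by linarith, le_refl 0⟩⟩ : Icc (-τ) (0:ℝ)) = x := rfl
      rw [hσ0] at key
      have harg : t + (r - t) = r := by ring
      rw [harg] at key
      rw [projIcc_of_mem hτ0 hmem]
      exact key.symm
    exact hg.continuousAt.congr (Filter.eventuallyEq_of_mem hnb heq).symm

lemma flow_lip {d : ℕ} {τ L : ℝ} (hL : 0 < L) {K : Rd d → Hist τ d → Rd d}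
    (hK : ∀ x x' σ σ', ‖K x σ - K x' σ'‖ ≤ L * (‖x - x'‖ + ‖σ - σ'‖))
    [MeasurableSpace (Hist τ d)] {μ : ℝ → Measure (Hist τ d)}
    (hprob : ∀ t, IsProbabilityMeasure (μ t))
    (hint : ∀ t x, Integrable (fun σ => K x σ) (μ t))
    {Tf : ℝ → Rd d → Rd d} (hTf0 : ∀ x, Tf 0 x = x)
    (hderiv : ∀ x : Rd d, ∀ t : ℝ, 0 ≤ t →
      HasDerivWithinAt (fun s => Tf s x) (∫ σ, K (Tf t x) σ ∂(μ t)) (Ici (0:ℝ)) t)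
    (hcont : ∀ x : Rd d, ContinuousOn (fun r => Tf r x) (Ici (0:ℝ)))
    {t : ℝ} (ht : 0 ≤ t) (x y : Rd d) :
    ‖Tf t x - Tf t y‖ ≤ Real.exp (L * t) * ‖x - y‖ := by
  have key := norm_le_gronwallBound_of_norm_deriv_right_le
    (f := fun u => Tf u x - Tf u y)
    (f' := fun u => (∫ σ, K (Tf u x) σ ∂(μ u)) - ∫ σ, K (Tf u y) σ ∂(μ u))
    (δ := ‖x - y‖) (K := L) (ε := 0) (a := 0) (b := t)
    (((hcont x).mono Icc_subset_Ici_self).sub ((hcont y).mono Icc_subset_Ici_self))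
    (fun u hu => ((hderiv x u hu.1).mono (Ici_subset_Ici.2 hu.1)).sub
      ((hderiv y u hu.1).mono (Ici_subset_Ici.2 hu.1)))
    (by show ‖Tf 0 x - Tf 0 y‖ ≤ ‖x - y‖; rw [hTf0, hTf0])
    ?_ t (by constructor <;> linarith)
  · rwa [sub_zero, gronwallBound_ε0, mul_comm] at key
  · intro u hu
    haveI := hprob u
    have e1 : (∫ σ, K (Tf u x) σ ∂(μ u)) - ∫ σ, K (Tf u y) σ ∂(μ u)
        = ∫ σ, (K (Tf u x) σ - K (Tf u y) σ) ∂(μ u) :=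
      (integral_sub (hint u _) (hint u _)).symm
    show ‖(∫ σ, K (Tf u x) σ ∂(μ u)) - ∫ σ, K (Tf u y) σ ∂(μ u)‖
      ≤ L * ‖Tf u x - Tf u y‖ + 0
    rw [e1, add_zero]
    calc ‖∫ σ, (K (Tf u x) σ - K (Tf u y) σ) ∂(μ u)‖
        ≤ ∫ σ, ‖K (Tf u x) σ - K (Tf u y) σ‖ ∂(μ u) := norm_integral_le_integral_norm _
      _ ≤ ∫ _σ, L * ‖Tf u x - Tf u y‖ ∂(μ u) := by
          apply integral_mono ((hint u _).sub (hint u _)).norm (integrable_const _)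
          intro σ
          have := hK (Tf u x) (Tf u y) σ σ
          simpa using this
      _ = L * ‖Tf u x - Tf u y‖ := by simp

lemma G_lip {d : ℕ} {τ L : ℝ} (hL : 0 < L) {Tf : ℝ → Rd d → Rd d}
    {G : ℝ → Hist τ d → Hist τ d} (hτ : 0 < τ) (hres : IsResExt τ Tf G)
    (hflow : ∀ t : ℝ, 0 ≤ t → ∀ x y, ‖Tf t x - Tf t y‖ ≤ Real.exp (L * t) * ‖x - y‖)
    {t : ℝ} (ht : 0 ≤ t) (σ σ' : Hist τ d) :
    dist (G t σ) (G t σ') ≤ Real.exp (L * t) * dist σ σ' := by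
  rw [ContinuousMap.dist_le (by positivity)]
  intro s
  have hs1 : -τ ≤ (s:ℝ) := s.2.1
  have hs2 : (s:ℝ) ≤ 0 := s.2.2
  rcases le_or_gt (t + (s:ℝ)) 0 with hc | hc
  · have hmem : t + (s:ℝ) ∈ Icc (-τ) (0:ℝ) := ⟨by linarith, hc⟩
    have e1 := (hres t ht σ s).1 ⟨t + (s:ℝ), hmem⟩ rfl
    have e2 := (hres t ht σ' s).1 ⟨t + (s:ℝ), hmem⟩ rfl
    rw [e1, e2]
    calc dist (σ ⟨t + (s:ℝ), hmem⟩) (σ' ⟨t + (s:ℝ), hmem⟩) ≤ dist σ σ' :=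
          ContinuousMap.dist_apply_le_dist _
      _ ≤ Real.exp (L * t) * dist σ σ' :=
          le_mul_of_one_le_left dist_nonneg (Real.one_le_exp (by positivity))
  · have hz : ((⟨0, ⟨by linarith, le_refl 0⟩⟩ : Icc (-τ) (0:ℝ)) : ℝ) = 0 := rfl
    have e1 := (hres t ht σ s).2 hc _ hz
    have e2 := (hres t ht σ' s).2 hc _ hz
    rw [e1, e2, dist_eq_norm]
    calc ‖Tf (t + (s:ℝ)) (σ ⟨0, _⟩) - Tf (t + (s:ℝ)) (σ' ⟨0, _⟩)‖
        ≤ Real.exp (L * (t + (s:ℝ))) * ‖σ ⟨0, _⟩ - σ' ⟨0, _⟩‖ := hflow _ hc.le _ _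
      _ ≤ Real.exp (L * t) * dist σ σ' := by
          apply mul_le_mul (Real.exp_le_exp.2 (by nlinarith)) ?_ (norm_nonneg _)
            (Real.exp_pos _).le
          rw [← dist_eq_norm]
          exact ContinuousMap.dist_apply_le_dist _

lemma G_norm_bound {d : ℕ} {τ L R₀ : ℝ} (hL : 0 < L) (hR : 0 < R₀) {Tf : ℝ → Rd d → Rd d}
    {G : ℝ → Hist τ d → Hist τ d} (hτ : 0 < τ) (hres : IsResExt τ Tf G)
    (hflow : ∀ t : ℝ, 0 ≤ t → ∀ x y, ‖Tf t x - Tf t y‖ ≤ Real.exp (L * t) * ‖x - y‖)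
    (hcont : ContinuousOn (fun r => Tf r 0) (Ici (0:ℝ)))
    {T : ℝ} (hT : 0 ≤ T) :
    ∃ C : ℝ, R₀ ≤ C ∧ ∀ t ∈ Icc (0:ℝ) T, ∀ σ : Hist τ d, ‖σ‖ ≤ R₀ → ‖G t σ‖ ≤ C := by
  obtain ⟨M, hM⟩ := isCompact_Icc.exists_bound_of_continuousOn
    (hcont.mono (Icc_subset_Ici_self : Icc (0:ℝ) T ⊆ Ici 0))
  refine ⟨max R₀ (M + Real.exp (L * T) * R₀), le_max_left _ _, ?_⟩
  intro t htm σ hσ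
  have ht := htm.1
  rw [ContinuousMap.norm_le _ (le_trans hR.le (le_max_left _ _))]
  intro s
  have hs1 : -τ ≤ (s:ℝ) := s.2.1
  have hs2 : (s:ℝ) ≤ 0 := s.2.2
  rcases le_or_gt (t + (s:ℝ)) 0 with hc | hc
  · have hmem : t + (s:ℝ) ∈ Icc (-τ) (0:ℝ) := ⟨by linarith, hc⟩
    rw [(hres t ht σ s).1 ⟨t + (s:ℝ), hmem⟩ rfl]
    exact le_trans (le_trans (σ.norm_coe_le_norm _) hσ) (le_max_left _ _)
  · have hz0 : (0:ℝ) ∈ Icc (-τ) (0:ℝ) := ⟨by linarith, le_refl 0⟩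
    rw [(hres t ht σ s).2 hc ⟨0, hz0⟩ rfl]
    have hts : t + (s:ℝ) ∈ Icc (0:ℝ) T := ⟨hc.le, by linarith [htm.2]⟩
    have hy : ‖σ ⟨0, hz0⟩‖ ≤ R₀ := le_trans (σ.norm_coe_le_norm _) hσ
    have h1 : ‖Tf (t + (s:ℝ)) (σ ⟨0, hz0⟩) - Tf (t + (s:ℝ)) 0‖
        ≤ Real.exp (L * (t + (s:ℝ))) * ‖σ ⟨0, hz0⟩ - 0‖ := hflow _ hc.le _ _
    rw [sub_zero] at h1
    have h2 : ‖Tf (t + (s:ℝ)) 0‖ ≤ M := hM _ hts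
    have h3 : ‖Tf (t + (s:ℝ)) (σ ⟨0, hz0⟩)‖
        ≤ ‖Tf (t + (s:ℝ)) (σ ⟨0, hz0⟩) - Tf (t + (s:ℝ)) 0‖ + ‖Tf (t + (s:ℝ)) 0‖ := by
      have := norm_add_le (Tf (t + (s:ℝ)) (σ ⟨0, hz0⟩) - Tf (t + (s:ℝ)) 0) (Tf (t + (s:ℝ)) 0)
      rwa [sub_add_cancel] at this
    have h4 : Real.exp (L * (t + (s:ℝ))) * ‖σ ⟨0, hz0⟩‖ ≤ Real.exp (L * T) * R₀ :=
      mul_le_mul (Real.exp_le_exp.2 (by nlinarith [htm.2])) hy (norm_nonneg _)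
        (Real.exp_pos _).le
    have : ‖Tf (t + (s:ℝ)) (σ ⟨0, hz0⟩)‖ ≤ Real.exp (L * T) * R₀ + M := by linarith
    exact this.trans (by rw [add_comm]; exact le_max_right _ _)

lemma G_cont_t {d : ℕ} {τ : ℝ} (hτ : 0 < τ) {Tf : ℝ → Rd d → Rd d}
    {G : ℝ → Hist τ d → Hist τ d} (hres : IsResExt τ Tf G)
    (hTf0 : ∀ x, Tf 0 x = x)
    (hcontx : ∀ x : Rd d, ContinuousOn (fun r => Tf r x) (Ici (0:ℝ)))
    (σ : Hist τ d) : ContinuousOn (fun u => G u σ) (Ici (0:ℝ)) := by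
  have hτ0 : (-τ) ≤ (0:ℝ) := by linarith
  have hz0 : (0:ℝ) ∈ Icc (-τ) (0:ℝ) := ⟨hτ0, le_refl 0⟩
  set z₀ : Icc (-τ) (0:ℝ) := ⟨0, hz0⟩ with hz₀
  have hΨ : Continuous (fun r : ℝ => Tf (max r 0) (σ z₀)) := by
    apply (hcontx (σ z₀)).comp_continuous (continuous_id.max continuous_const)
    intro x; exact mem_Ici.2 (le_max_right _ _)
  have hΘ : Continuous (fun r : ℝ => σ (projIcc (-τ) 0 hτ0 r)) :=
    σ.continuous.comp continuous_projIcc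
  set Φ : ℝ → Rd d := fun r =>
    if r ≤ 0 then σ (projIcc (-τ) 0 hτ0 r) else Tf (max r 0) (σ z₀) with hΦdef
  have hΦ : Continuous Φ := by
    apply Continuous.if_le hΘ hΨ continuous_id continuous_const
    intro a ha
    rw [show a = 0 from ha]
    have : projIcc (-τ) 0 hτ0 (0:ℝ) = z₀ := projIcc_of_mem hτ0 hz0
    rw [this, max_self]
    rw [hTf0]
  have hGΦ : ∀ u : ℝ, 0 ≤ u → ∀ s : Icc (-τ) (0:ℝ), G u σ s = Φ (u + (s:ℝ)) := by
    intro u hu s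
    have hs1 : -τ ≤ (s:ℝ) := s.2.1
    have hs2 : (s:ℝ) ≤ 0 := s.2.2
    rcases le_or_gt (u + (s:ℝ)) 0 with hc | hc
    · have hmem : u + (s:ℝ) ∈ Icc (-τ) (0:ℝ) := ⟨by linarith, hc⟩
      rw [(hres u hu σ s).1 ⟨u + (s:ℝ), hmem⟩ rfl]
      rw [hΦdef]
      simp only [if_pos hc]
      rw [projIcc_of_mem hτ0 hmem]
    · rw [(hres u hu σ s).2 hc z₀ rfl]
      rw [hΦdef]
      simp only [if_neg (not_le.2 hc)]
      rw [max_eq_left hc.le]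
  set Hmap : C(ℝ × Icc (-τ) (0:ℝ), Rd d) :=
    ⟨fun p => Φ (p.1 + (p.2:ℝ)), hΦ.comp (by continuity)⟩ with hHdef
  have : ∀ u ∈ Ici (0:ℝ), G u σ = Hmap.curry u := by
    intro u hu
    ext s
    rw [hGΦ u hu s]
    rfl
  exact (Hmap.curry.continuous.continuousOn).congr this

lemma norm_int_sub_le {d : ℕ} {τ L : ℝ} {K : Rd d → Hist τ d → Rd d}
    (hK : ∀ x x' σ σ', ‖K x σ - K x' σ'‖ ≤ L * (‖x - x'‖ + ‖σ - σ'‖))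
    [MeasurableSpace (Hist τ d)] {m : Measure (Hist τ d)} [IsProbabilityMeasure m]
    (hint : ∀ x, Integrable (fun σ => K x σ) m) (x y : Rd d) :
    ‖(∫ σ, K x σ ∂m) - ∫ σ, K y σ ∂m‖ ≤ L * ‖x - y‖ := by
  rw [← integral_sub (hint x) (hint y)]
  calc ‖∫ σ, (K x σ - K y σ) ∂m‖ ≤ ∫ σ, ‖K x σ - K y σ‖ ∂m := norm_integral_le_integral_norm _
    _ ≤ ∫ _σ, L * ‖x - y‖ ∂m := by
        apply integral_mono ((hint x).sub (hint y)).norm (integrable_const _)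
        intro σ
        have := hK x y σ σ
        simpa using this
    _ = L * ‖x - y‖ := by simp

lemma flow_compare {d : ℕ} {τ L : ℝ} (hL : 0 < L) {K : Rd d → Hist τ d → Rd d}
    (hK : ∀ x x' σ σ', ‖K x σ - K x' σ'‖ ≤ L * (‖x - x'‖ + ‖σ - σ'‖))
    [MeasurableSpace (Hist τ d)] {μ ν : ℝ → Measure (Hist τ d)}
    (hμprob : ∀ t, IsProbabilityMeasure (μ t)) (hνprob : ∀ t, IsProbabilityMeasure (ν t))
    (hμint : ∀ t x, Integrable (fun σ => K x σ) (μ t))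
    (hνint : ∀ t x, Integrable (fun σ => K x σ) (ν t))
    {Tfμ Tfν : ℝ → Rd d → Rd d} (hTfμ0 : ∀ x, Tfμ 0 x = x) (hTfν0 : ∀ x, Tfν 0 x = x)
    (hμderiv : ∀ x : Rd d, ∀ t : ℝ, 0 ≤ t →
      HasDerivWithinAt (fun s => Tfμ s x) (∫ σ, K (Tfμ t x) σ ∂(μ t)) (Ici (0:ℝ)) t)
    (hνderiv : ∀ x : Rd d, ∀ t : ℝ, 0 ≤ t →
      HasDerivWithinAt (fun s => Tfν s x) (∫ σ, K (Tfν t x) σ ∂(ν t)) (Ici (0:ℝ)) t)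
    (hcontμ : ∀ x : Rd d, ContinuousOn (fun r => Tfμ r x) (Ici (0:ℝ)))
    (hcontν : ∀ x : Rd d, ContinuousOn (fun r => Tfν r x) (Ici (0:ℝ)))
    {F : ℝ → ℝ} (hF : Continuous F) (hFnn : ∀ u, 0 ≤ F u)
    (hdrift : ∀ u : ℝ, 0 ≤ u → ∀ y : Rd d,
      ‖(∫ σ, K y σ ∂(μ u)) - ∫ σ, K y σ ∂(ν u)‖ ≤ L * F u)
    {t : ℝ} (ht : 0 ≤ t) (x : Rd d) :
    ∀ r ∈ Icc (0:ℝ) t, ‖Tfμ r x - Tfν r x‖ ≤ L * Real.exp (L * t) * ∫ u in (0:ℝ)..t, F u := by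
  have hFe : Continuous fun r : ℝ => Real.exp (-(L * r)) * F r := by
    exact ((continuous_const.mul continuous_id).neg.rexp).mul hF
  set I : ℝ → ℝ := fun u => ∫ r in (0:ℝ)..u, Real.exp (-(L * r)) * F r with hIdef
  have hI' : ∀ u : ℝ, HasDerivAt I (Real.exp (-(L * u)) * F u) u := fun u =>
    intervalIntegral.integral_hasDerivAt_right (hFe.intervalIntegrable _ _)
      hFe.aestronglyMeasurable.stronglyMeasurableAtFilter hFe.continuousAt
  set Δ : ℝ → Rd d := fun u => Tfμ u x - Tfν u x with hΔdef
  have hΔcont : ContinuousOn Δ (Icc 0 t) :=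
    ((hcontμ x).mono Icc_subset_Ici_self).sub ((hcontν x).mono Icc_subset_Ici_self)
  set D : ℝ → Rd d := fun u => (∫ σ, K (Tfμ u x) σ ∂(μ u)) - ∫ σ, K (Tfν u x) σ ∂(ν u)
    with hDdef
  have hΔ' : ∀ u ∈ Ico (0:ℝ) t, HasDerivWithinAt Δ (D u) (Ici u) u := fun u hu =>
    ((hμderiv x u hu.1).mono (Ici_subset_Ici.2 hu.1)).sub
      ((hνderiv x u hu.1).mono (Ici_subset_Ici.2 hu.1))
  have hDbound : ∀ u ∈ Ico (0:ℝ) t, ‖D u‖ ≤ L * ‖Δ u‖ + L * F u := by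
    intro u hu
    haveI := hμprob u
    haveI := hνprob u
    have h1 : ‖(∫ σ, K (Tfμ u x) σ ∂(μ u)) - ∫ σ, K (Tfν u x) σ ∂(μ u)‖
        ≤ L * ‖Tfμ u x - Tfν u x‖ := norm_int_sub_le hK (hμint u) _ _
    have h2 : ‖(∫ σ, K (Tfν u x) σ ∂(μ u)) - ∫ σ, K (Tfν u x) σ ∂(ν u)‖
        ≤ L * F u := hdrift u hu.1 _
    calc ‖D u‖ = ‖((∫ σ, K (Tfμ u x) σ ∂(μ u)) - ∫ σ, K (Tfν u x) σ ∂(μ u))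
          + ((∫ σ, K (Tfν u x) σ ∂(μ u)) - ∫ σ, K (Tfν u x) σ ∂(ν u))‖ := by
          congr 1; simp only [hDdef]; abel
      _ ≤ ‖(∫ σ, K (Tfμ u x) σ ∂(μ u)) - ∫ σ, K (Tfν u x) σ ∂(μ u)‖
          + ‖(∫ σ, K (Tfν u x) σ ∂(μ u)) - ∫ σ, K (Tfν u x) σ ∂(ν u)‖ := norm_add_le _ _
      _ ≤ L * ‖Δ u‖ + L * F u := add_le_add h1 h2
  have key : ∀ η : ℝ, 0 < η → ∀ r ∈ Icc (0:ℝ) t,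
      ‖Δ r‖ ≤ Real.exp (L * r) * (L * I r + η * (r + 1)) := by
    intro η hη
    set B : ℝ → ℝ := fun u => Real.exp (L * u) * (L * I u + η * (u + 1)) with hBdef
    set B' : ℝ → ℝ := fun u =>
      L * B u + Real.exp (L * u) * (L * (Real.exp (-(L * u)) * F u) + η) with hB'def
    have hB : ∀ u : ℝ, HasDerivAt B (B' u) u := by
      intro u
      have h1 : HasDerivAt (fun u : ℝ => Real.exp (L * u)) (Real.exp (L * u) * L) u := by
        simpa using ((hasDerivAt_id u).const_mul L).exp
      have h2 : HasDerivAt (fun u : ℝ => L * I u + η * (u + 1))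
          (L * (Real.exp (-(L * u)) * F u) + η) u := by
        have h3 : HasDerivAt (fun u : ℝ => η * (u + 1)) (η * 1) u :=
          ((hasDerivAt_id u).add_const 1).const_mul η
        rw [mul_one] at h3
        exact ((hI' u).const_mul L).add h3
      have := h1.mul h2
      exact this.congr_deriv (by simp only [hB'def, hBdef]; ring)
    have ha : ‖Δ 0‖ ≤ B 0 := by
      have : Δ 0 = 0 := by rw [hΔdef]; simp [hTfμ0, hTfν0]
      rw [this, norm_zero, hBdef]
      have hI0 : I 0 = 0 := intervalIntegral.integral_same
      simp only [hI0]
      have h9 := Real.exp_pos (L * (0:ℝ))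
      nlinarith
    have bound : ∀ u ∈ Ico (0:ℝ) t, ‖Δ u‖ = B u → ‖D u‖ < B' u := by
      intro u hu hBu
      have h1 := hDbound u hu
      have h2 : Real.exp (L * u) * Real.exp (-(L * u)) = 1 := by
        rw [← Real.exp_add]; simp
      have h3 : B' u = L * B u + L * F u * (Real.exp (L * u) * Real.exp (-(L * u)))
          + η * Real.exp (L * u) := by rw [hB'def]; ring
      rw [h3, h2] at *
      have := Real.exp_pos (L * u)
      rw [hBu] at h1
      nlinarith
    exact fun r hr =>
      image_norm_le_of_norm_deriv_right_lt_deriv_boundary hΔcont hΔ' ha hB bound hr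
  intro r hr
  have hIr_nn : 0 ≤ I r := by
    apply intervalIntegral.integral_nonneg hr.1
    intro u _
    exact mul_nonneg (Real.exp_pos _).le (hFnn u)
  have step1 : ‖Δ r‖ ≤ Real.exp (L * r) * (L * I r) := by
    apply le_of_forall_pos_le_add
    intro ε hε
    have hden : 0 < Real.exp (L * r) * (r + 1) := by
      have : (0:ℝ) < r + 1 := by linarith [hr.1]
      positivity
    have := key (ε / (Real.exp (L * r) * (r + 1))) (div_pos hε hden) r hr
    calc ‖Δ r‖ ≤ Real.exp (L * r) * (L * I r + ε / (Real.exp (L * r) * (r + 1)) * (r + 1)) :=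
          this
      _ = Real.exp (L * r) * (L * I r) + ε := by
          field_simp [(show (0:ℝ) < r + 1 by linarith [hr.1]).ne']
  have step2 : I r ≤ ∫ u in (0:ℝ)..t, F u := by
    have hIr : I r ≤ ∫ u in (0:ℝ)..r, F u := by
      apply intervalIntegral.integral_mono_on hr.1 (hFe.intervalIntegrable _ _)
        (hF.intervalIntegrable _ _)
      intro u hu
      calc Real.exp (-(L * u)) * F u ≤ 1 * F u := by
            apply mul_le_mul_of_nonneg_right _ (hFnn u)
            rw [Real.exp_le_one_iff]
            have := hu.1
            nlinarith
        _ = F u := one_mul _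
    refine hIr.trans ?_
    apply intervalIntegral.integral_mono_interval (le_refl (0:ℝ)) hr.1 hr.2
      _ (hF.intervalIntegrable _ _)
    filter_upwards with u using hFnn u
  calc ‖Tfμ r x - Tfν r x‖ = ‖Δ r‖ := rfl
    _ ≤ Real.exp (L * r) * (L * I r) := step1
    _ ≤ Real.exp (L * t) * (L * ∫ u in (0:ℝ)..t, F u) := by
        apply mul_le_mul (Real.exp_le_exp.2 (by nlinarith [hr.2])) _ (by positivity)
          (Real.exp_pos _).le
        exact mul_le_mul_of_nonneg_left step2 hL.le
    _ = L * Real.exp (L * t) * ∫ u in (0:ℝ)..t, F u := by ring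

variable {τ : ℝ} {d : ℕ} [MeasurableSpace (Hist τ d)] [BorelSpace (Hist τ d)]

lemma map_supp {R C : ℝ} {m : Measure (Hist τ d)}
    (hsupp : m (Metric.closedBall 0 R)ᶜ = 0) {G : Hist τ d → Hist τ d}
    (hGm : Measurable G) (hC : ∀ σ, ‖σ‖ ≤ R → ‖G σ‖ ≤ C) :
    (m.map G) (Metric.closedBall 0 C)ᶜ = 0 := by
  rw [Measure.map_apply hGm measurableSet_closedBall.compl]
  apply measure_mono_null _ hsupp
  intro σ hσ
  simp only [mem_preimage, mem_compl_iff, Metric.mem_closedBall, dist_zero_right] at *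
  intro hc
  exact hσ (hC σ hc)

lemma comp_integrable {R C : ℝ} {m : Measure (Hist τ d)} [IsProbabilityMeasure m]
    (hsupp : m (Metric.closedBall 0 R)ᶜ = 0) {G : Hist τ d → Hist τ d}
    (hGm : Measurable G) (hC : ∀ σ, ‖σ‖ ≤ R → ‖G σ‖ ≤ C) {φ : Hist τ d → ℝ}
    (hφ : LipschitzWith 1 φ) : Integrable (fun σ => φ (G σ)) m := by
  refine Integrable.mono' (integrable_const (|φ 0| + C))
    (hφ.continuous.measurable.comp hGm).aestronglyMeasurable ?_
  have hae : ∀ᵐ σ ∂m, ‖σ‖ ≤ R := by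
    have hset : {σ : Hist τ d | ¬ ‖σ‖ ≤ R} = (Metric.closedBall 0 R)ᶜ := by
      ext x; simp [mem_closedBall_zero_iff]
    rw [ae_iff, hset]; exact hsupp
  filter_upwards [hae] with σ hσ
  have h1 : dist (φ (G σ)) (φ 0) ≤ 1 * dist (G σ) 0 := hφ.dist_le_mul _ 0
  rw [Real.dist_eq, dist_zero_right, one_mul] at h1
  have h2 : ‖G σ‖ ≤ C := hC σ hσ
  have : |φ (G σ)| ≤ |φ (G σ) - φ 0| + |φ 0| := by
    calc |φ (G σ)| = |(φ (G σ) - φ 0) + φ 0| := by ring_nf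
      _ ≤ |φ (G σ) - φ 0| + |φ 0| := abs_add_le _ _
  simp only [Real.norm_eq_abs]
  linarith

lemma dist_integrable {R C : ℝ} {m : Measure (Hist τ d)} [IsProbabilityMeasure m]
    (hsupp : m (Metric.closedBall 0 R)ᶜ = 0) {G₁ G₂ : Hist τ d → Hist τ d}
    (hG₁ : Measurable G₁) (hG₂ : Measurable G₂)
    (hC₁ : ∀ σ, ‖σ‖ ≤ R → ‖G₁ σ‖ ≤ C) (hC₂ : ∀ σ, ‖σ‖ ≤ R → ‖G₂ σ‖ ≤ C) :
    Integrable (fun σ => dist (G₁ σ) (G₂ σ)) m := by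
  refine Integrable.mono' (integrable_const (2*C)) (hG₁.dist hG₂).aestronglyMeasurable ?_
  have hae : ∀ᵐ σ ∂m, ‖σ‖ ≤ R := by
    have hset : {σ : Hist τ d | ¬ ‖σ‖ ≤ R} = (Metric.closedBall 0 R)ᶜ := by
      ext x; simp [mem_closedBall_zero_iff]
    rw [ae_iff, hset]; exact hsupp
  filter_upwards [hae] with σ hσ
  have := dist_le_norm_add_norm (G₁ σ) (G₂ σ)
  have h1 := hC₁ σ hσ
  have h2 := hC₂ σ hσ
  rw [Real.norm_eq_abs, abs_of_nonneg dist_nonneg]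
  linarith


/-- `μ` is the mean-field solution on `[0,∞)` with initial distribution `μin` supported in
`B(0,R₀)` : `Tf` is the flow of `F[μ]`, `G t = res[t] ∘ ext[μ]`, and `μ` satisfies the
fixed-point equation `μ(t) = (res[t] ∘ ext[μ]) # μin`. -/
def IsFixedPointSol {d : ℕ} (τ R₀ : ℝ) [MeasurableSpace (Hist τ d)]
    (K : Rd d → Hist τ d → Rd d)
    (μin : Measure (Hist τ d)) (μ : ℝ → Measure (Hist τ d))
    (Tf : ℝ → Rd d → Rd d) (G : ℝ → Hist τ d → Hist τ d) : Prop :=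
  (∀ t, IsProbabilityMeasure (μ t)) ∧ μ 0 = μin ∧
  μin (Metric.closedBall (0 : Hist τ d) R₀)ᶜ = 0 ∧
  (∀ t x, Integrable (fun σ => K x σ) (μ t)) ∧
  (∀ x, Tf 0 x = x) ∧
  (∀ x, ∀ t : ℝ, 0 ≤ t →
    HasDerivWithinAt (fun s => Tf s x) (∫ σ, K (Tf t x) σ ∂(μ t)) (Set.Ici (0:ℝ)) t) ∧
  (∀ t, Measurable (G t)) ∧
  IsResExt τ Tf G ∧
  (∀ t : ℝ, 0 ≤ t → μ t = μin.map (G t))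

theorem stmt12 {d : ℕ} (τ L R₀ : ℝ) (hτ : 0 < τ) (hL : 0 < L) (hR : 0 < R₀)
    [MeasurableSpace (Hist τ d)] [BorelSpace (Hist τ d)]
    (K : Rd d → Hist τ d → Rd d)
    (hK : ∀ x x' σ σ', ‖K x σ - K x' σ'‖ ≤ L * (‖x - x'‖ + ‖σ - σ'‖))
    (μin νin : Measure (Hist τ d))
    [IsProbabilityMeasure μin] [IsProbabilityMeasure νin]
    (μ ν : ℝ → Measure (Hist τ d))
    (Tfμ Tfν : ℝ → Rd d → Rd d) (Gμ Gν : ℝ → Hist τ d → Hist τ d)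
    (hμ : IsFixedPointSol τ R₀ K μin μ Tfμ Gμ)
    (hν : IsFixedPointSol τ R₀ K νin ν Tfν Gν) :
    (∀ t : ℝ, 0 ≤ t →
      W1 (μ t) (ν t)
        ≤ Real.exp (L*t) * W1 μin νin
          + L * Real.exp (L*t) * ∫ r in (0:ℝ)..t, W1 (μ r) (ν r)) ∧
    ∃ r : ℝ → ℝ, Continuous r ∧ MonotoneOn r (Set.Ici (0:ℝ)) ∧ r 0 = 1 ∧
      (∀ t : ℝ, 0 ≤ t → 1 ≤ r t) ∧
      ∀ t : ℝ, 0 ≤ t → W1 (μ t) (ν t) ≤ r t * W1 μin νin := by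
  obtain ⟨hμprob, hμ0, hμsupp, hμint, hμTf0, hμderiv, hμGmeas, hμres, hμfix⟩ := hμ
  obtain ⟨hνprob, hν0, hνsupp, hνint, hνTf0, hνderiv, hνGmeas, hνres, hνfix⟩ := hν
  have hcontμ : ∀ x : Rd d, ContinuousOn (fun r => Tfμ r x) (Ici (0:ℝ)) :=
    flow_contOn hτ hμres (fun x => (hμderiv x 0 le_rfl).continuousWithinAt)
  have hcontν : ∀ x : Rd d, ContinuousOn (fun r => Tfν r x) (Ici (0:ℝ)) :=
    flow_contOn hτ hνres (fun x => (hνderiv x 0 le_rfl).continuousWithinAt)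
  have hflowμ : ∀ t : ℝ, 0 ≤ t → ∀ x y, ‖Tfμ t x - Tfμ t y‖ ≤ Real.exp (L*t) * ‖x - y‖ :=
    fun t ht x y => flow_lip hL hK hμprob hμint hμTf0 hμderiv hcontμ ht x y
  have hflowν : ∀ t : ℝ, 0 ≤ t → ∀ x y, ‖Tfν t x - Tfν t y‖ ≤ Real.exp (L*t) * ‖x - y‖ :=
    fun t ht x y => flow_lip hL hK hνprob hνint hνTf0 hνderiv hcontν ht x y
  have hGlipμ : ∀ t : ℝ, 0 ≤ t → ∀ σ σ',
      dist (Gμ t σ) (Gμ t σ') ≤ Real.exp (L*t) * dist σ σ' :=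
    fun t ht => G_lip hL hτ hμres hflowμ ht
  have hGcontμ : ∀ σ, ContinuousOn (fun u => Gμ u σ) (Ici (0:ℝ)) :=
    G_cont_t hτ hμres hμTf0 hcontμ
  have hGcontν : ∀ σ, ContinuousOn (fun u => Gν u σ) (Ici (0:ℝ)) :=
    G_cont_t hτ hνres hνTf0 hcontν
  have hsuppall : ∀ T : ℝ, 0 ≤ T → ∃ C, R₀ ≤ C ∧ ∀ t ∈ Icc (0:ℝ) T,
      ((μ t) (Metric.closedBall 0 C)ᶜ = 0 ∧ (ν t) (Metric.closedBall 0 C)ᶜ = 0) ∧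
      ((∀ σ : Hist τ d, ‖σ‖ ≤ R₀ → ‖Gμ t σ‖ ≤ C) ∧
        (∀ σ : Hist τ d, ‖σ‖ ≤ R₀ → ‖Gν t σ‖ ≤ C)) := by
    intro T hT
    obtain ⟨C₁, hC₁, hB₁⟩ := G_norm_bound hL hR hτ hμres hflowμ (hcontμ 0) hT
    obtain ⟨C₂, hC₂, hB₂⟩ := G_norm_bound hL hR hτ hνres hflowν (hcontν 0) hT
    refine ⟨max C₁ C₂, hC₁.trans (le_max_left _ _), fun t ht => ?_⟩
    have hbμ : ∀ σ : Hist τ d, ‖σ‖ ≤ R₀ → ‖Gμ t σ‖ ≤ max C₁ C₂ :=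
      fun σ hσ => (hB₁ t ht σ hσ).trans (le_max_left _ _)
    have hbν : ∀ σ : Hist τ d, ‖σ‖ ≤ R₀ → ‖Gν t σ‖ ≤ max C₁ C₂ :=
      fun σ hσ => (hB₂ t ht σ hσ).trans (le_max_right _ _)
    refine ⟨⟨?_, ?_⟩, hbμ, hbν⟩
    · rw [hμfix t ht.1]; exact map_supp hμsupp (hμGmeas t) hbμ
    · rw [hνfix t ht.1]; exact map_supp hνsupp (hνGmeas t) hbν
  have hfnn : ∀ u : ℝ, 0 ≤ W1 (μ u) (ν u) := fun u => W1_nonneg _ _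
  have hAnn : 0 ≤ W1 μin νin := W1_nonneg _ _
  have hdrift : ∀ u : ℝ, 0 ≤ u → ∀ y : Rd d,
      ‖(∫ σ, K y σ ∂(μ u)) - ∫ σ, K y σ ∂(ν u)‖ ≤ L * W1 (μ u) (ν u) := by
    intro u hu y
    obtain ⟨C, hCR, hall⟩ := hsuppall u hu
    obtain ⟨⟨hmσ, hnσ⟩, _, _⟩ := hall u ⟨hu, le_rfl⟩
    haveI := hμprob u; haveI := hνprob u
    refine norm_integral_sub_le_W1 hmσ hnσ hL ?_ (hμint u y) (hνint u y)
    intro σ σ'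
    have := hK y y σ σ'
    simpa using this
  -- continuity of t ↦ W1 (μ t) (ν t)
  have hfcont : ContinuousOn (fun u => W1 (μ u) (ν u)) (Ici (0:ℝ)) := by
    intro u hu
    have hu0 : (0:ℝ) ≤ u := hu
    obtain ⟨C, hCR, hall⟩ := hsuppall (u+1) (by linarith)
    have humem : u ∈ Icc (0:ℝ) (u+1) := ⟨hu0, by linarith⟩
    obtain ⟨⟨hmu, hnu⟩, hbμu, hbνu⟩ := hall u humem
    haveI := hμprob u; haveI := hνprob u
    have hev : ∀ᶠ u' in nhdsWithin u (Ici (0:ℝ)), u' ∈ Icc (0:ℝ) (u+1) := by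
      have h1 : ∀ᶠ u' in nhdsWithin u (Ici (0:ℝ)), u' ∈ Ici (0:ℝ) :=
        eventually_mem_nhdsWithin
      have h2 : ∀ᶠ u' in nhdsWithin u (Ici (0:ℝ)), u' < u+1 :=
        eventually_nhdsWithin_of_eventually_nhds
          (Filter.Tendsto.eventually_lt_const (by linarith) Filter.tendsto_id)
      filter_upwards [h1, h2] with u' ha hb
      exact ⟨ha, hb.le⟩
    have hcore : ∀ v ∈ Icc (0:ℝ) (u+1), ∀ w ∈ Icc (0:ℝ) (u+1),
        ∀ φ : Hist τ d → ℝ, LipschitzWith 1 φ →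
        ((∫ x, φ x ∂(μ v)) - ∫ x, φ x ∂(ν v)) - ((∫ x, φ x ∂(μ w)) - ∫ x, φ x ∂(ν w))
          ≤ (∫ σ, dist (Gμ v σ) (Gμ w σ) ∂μin) + ∫ σ, dist (Gν v σ) (Gν w σ) ∂νin := by
      intro v hv w hw φ hφ
      obtain ⟨_, hbμv, hbνv⟩ := hall v hv
      obtain ⟨_, hbμw, hbνw⟩ := hall w hw
      have e1 : ∫ x, φ x ∂(μ v) = ∫ σ, φ (Gμ v σ) ∂μin := by
        rw [hμfix v hv.1]
        exact integral_map (hμGmeas v).aemeasurable hφ.continuous.aestronglyMeasurable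
      have e2 : ∫ x, φ x ∂(ν v) = ∫ σ, φ (Gν v σ) ∂νin := by
        rw [hνfix v hv.1]
        exact integral_map (hνGmeas v).aemeasurable hφ.continuous.aestronglyMeasurable
      have e3 : ∫ x, φ x ∂(μ w) = ∫ σ, φ (Gμ w σ) ∂μin := by
        rw [hμfix w hw.1]
        exact integral_map (hμGmeas w).aemeasurable hφ.continuous.aestronglyMeasurable
      have e4 : ∫ x, φ x ∂(ν w) = ∫ σ, φ (Gν w σ) ∂νin := by
        rw [hνfix w hw.1]
        exact integral_map (hνGmeas w).aemeasurable hφ.continuous.aestronglyMeasurable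
      have i1 : Integrable (fun σ => φ (Gμ v σ)) μin :=
        comp_integrable hμsupp (hμGmeas v) hbμv hφ
      have i2 : Integrable (fun σ => φ (Gμ w σ)) μin :=
        comp_integrable hμsupp (hμGmeas w) hbμw hφ
      have i3 : Integrable (fun σ => φ (Gν v σ)) νin :=
        comp_integrable hνsupp (hνGmeas v) hbνv hφ
      have i4 : Integrable (fun σ => φ (Gν w σ)) νin :=
        comp_integrable hνsupp (hνGmeas w) hbνw hφ
      have d1 : Integrable (fun σ => dist (Gμ v σ) (Gμ w σ)) μin :=
        dist_integrable hμsupp (hμGmeas v) (hμGmeas w) hbμv hbμw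
      have d2 : Integrable (fun σ => dist (Gν v σ) (Gν w σ)) νin :=
        dist_integrable hνsupp (hνGmeas v) (hνGmeas w) hbνv hbνw
      have k1 : (∫ σ, φ (Gμ v σ) ∂μin) - (∫ σ, φ (Gμ w σ) ∂μin)
          ≤ ∫ σ, dist (Gμ v σ) (Gμ w σ) ∂μin := by
        rw [← integral_sub i1 i2]
        apply integral_mono (i1.sub i2) d1
        intro σ
        have h1 := hφ.dist_le_mul (Gμ v σ) (Gμ w σ)
        rw [NNReal.coe_one, one_mul, Real.dist_eq] at h1
        exact le_trans (le_abs_self _) h1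
      have k2 : (∫ σ, φ (Gν w σ) ∂νin) - (∫ σ, φ (Gν v σ) ∂νin)
          ≤ ∫ σ, dist (Gν v σ) (Gν w σ) ∂νin := by
        rw [← integral_sub i4 i3]
        apply integral_mono (i4.sub i3) d2
        intro σ
        have h1 := hφ.dist_le_mul (Gν w σ) (Gν v σ)
        rw [NNReal.coe_one, one_mul, Real.dist_eq] at h1
        show φ (Gν w σ) - φ (Gν v σ) ≤ dist (Gν v σ) (Gν w σ)
        rw [dist_comm (Gν v σ) (Gν w σ)]
        exact le_trans (le_abs_self _) h1
      rw [e1, e2, e3, e4]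
      linarith
    have hest : ∀ u' ∈ Icc (0:ℝ) (u+1),
        |W1 (μ u') (ν u') - W1 (μ u) (ν u)|
          ≤ (∫ σ, dist (Gμ u' σ) (Gμ u σ) ∂μin) + ∫ σ, dist (Gν u' σ) (Gν u σ) ∂νin := by
      intro u' hu'
      obtain ⟨⟨hmu', hnu'⟩, hbμ', hbν'⟩ := hall u' hu'
      haveI := hμprob u'; haveI := hνprob u'
      have hsymm1 : (∫ σ, dist (Gμ u σ) (Gμ u' σ) ∂μin) = ∫ σ, dist (Gμ u' σ) (Gμ u σ) ∂μin :=
        integral_congr_ae (Filter.Eventually.of_forall fun σ => dist_comm _ _)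
      have hsymm2 : (∫ σ, dist (Gν u σ) (Gν u' σ) ∂νin) = ∫ σ, dist (Gν u' σ) (Gν u σ) ∂νin :=
        integral_congr_ae (Filter.Eventually.of_forall fun σ => dist_comm _ _)
      have dir1 : W1 (μ u') (ν u') ≤ W1 (μ u) (ν u)
          + ((∫ σ, dist (Gμ u' σ) (Gμ u σ) ∂μin) + ∫ σ, dist (Gν u' σ) (Gν u σ) ∂νin) := by
        apply csSup_le ⟨0, W1_zero_mem _ _⟩
        rintro a ⟨φ, hφ, rfl⟩
        have hb : (∫ x, φ x ∂(μ u)) - ∫ x, φ x ∂(ν u) ≤ W1 (μ u) (ν u) :=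
          le_csSup (W1_bddAbove hmu hnu) ⟨φ, hφ, rfl⟩
        have := hcore u' hu' u humem φ hφ
        linarith
      have dir2 : W1 (μ u) (ν u) ≤ W1 (μ u') (ν u')
          + ((∫ σ, dist (Gμ u' σ) (Gμ u σ) ∂μin) + ∫ σ, dist (Gν u' σ) (Gν u σ) ∂νin) := by
        apply csSup_le ⟨0, W1_zero_mem _ _⟩
        rintro a ⟨φ, hφ, rfl⟩
        have hb : (∫ x, φ x ∂(μ u')) - ∫ x, φ x ∂(ν u') ≤ W1 (μ u') (ν u') :=
          le_csSup (W1_bddAbove hmu' hnu') ⟨φ, hφ, rfl⟩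
        have := hcore u humem u' hu' φ hφ
        rw [hsymm1, hsymm2] at this
        linarith
      rw [abs_sub_le_iff]
      constructor <;> linarith
    have homega1 : Filter.Tendsto (fun u' => ∫ σ, dist (Gμ u' σ) (Gμ u σ) ∂μin)
        (nhdsWithin u (Ici (0:ℝ))) (nhds (0:ℝ)) := by
      have t1 : Filter.Tendsto (fun u' => ∫ σ, dist (Gμ u' σ) (Gμ u σ) ∂μin)
          (nhdsWithin u (Ici (0:ℝ))) (nhds (∫ _σ, (0:ℝ) ∂μin)) := by
        apply tendsto_integral_filter_of_dominated_convergence (fun _ => 2*C)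
        · exact Filter.Eventually.of_forall fun u' =>
            ((hμGmeas u').dist (hμGmeas u)).aestronglyMeasurable
        · filter_upwards [hev] with u' hu'
          obtain ⟨_, hbμ', _⟩ := hall u' hu'
          filter_upwards [ae_norm_le hμsupp] with σ hσ
          rw [Real.norm_eq_abs, abs_of_nonneg dist_nonneg]
          have := dist_le_norm_add_norm (Gμ u' σ) (Gμ u σ)
          linarith [hbμ' σ hσ, hbμu σ hσ]
        · exact integrable_const _
        · apply Filter.Eventually.of_forall
          intro σ
          have hcw := hGcontμ σ u hu
          have hdd : Filter.Tendsto (fun v => dist (Gμ v σ) (Gμ u σ)) (nhdsWithin u (Ici (0:ℝ)))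
              (nhds (dist (Gμ u σ) (Gμ u σ))) := hcw.dist tendsto_const_nhds
          simpa using hdd
      simpa using t1
    have homega2 : Filter.Tendsto (fun u' => ∫ σ, dist (Gν u' σ) (Gν u σ) ∂νin)
        (nhdsWithin u (Ici (0:ℝ))) (nhds (0:ℝ)) := by
      have t2 : Filter.Tendsto (fun u' => ∫ σ, dist (Gν u' σ) (Gν u σ) ∂νin)
          (nhdsWithin u (Ici (0:ℝ))) (nhds (∫ _σ, (0:ℝ) ∂νin)) := by
        apply tendsto_integral_filter_of_dominated_convergence (fun _ => 2*C)
        · exact Filter.Eventually.of_forall fun u' =>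
            ((hνGmeas u').dist (hνGmeas u)).aestronglyMeasurable
        · filter_upwards [hev] with u' hu'
          obtain ⟨_, _, hbν'⟩ := hall u' hu'
          filter_upwards [ae_norm_le hνsupp] with σ hσ
          rw [Real.norm_eq_abs, abs_of_nonneg dist_nonneg]
          have := dist_le_norm_add_norm (Gν u' σ) (Gν u σ)
          linarith [hbν' σ hσ, hbνu σ hσ]
        · exact integrable_const _
        · apply Filter.Eventually.of_forall
          intro σ
          have hcw := hGcontν σ u hu
          have hdd : Filter.Tendsto (fun v => dist (Gν v σ) (Gν u σ)) (nhdsWithin u (Ici (0:ℝ)))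
              (nhds (dist (Gν u σ) (Gν u σ))) := hcw.dist tendsto_const_nhds
          simpa using hdd
      simpa using t2
    have homega := homega1.add homega2
    rw [add_zero] at homega
    have hsq : Filter.Tendsto (fun u' => W1 (μ u') (ν u') - W1 (μ u) (ν u))
        (nhdsWithin u (Ici (0:ℝ))) (nhds 0) := by
      apply squeeze_zero_norm' ?_ homega
      filter_upwards [hev] with u' hu'
      rw [Real.norm_eq_abs]
      exact hest u' hu'
    have := hsq.add (tendsto_const_nhds (x := W1 (μ u) (ν u))
      (f := nhdsWithin u (Ici (0:ℝ))))
    rw [zero_add] at this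
    have heq : (fun u' => W1 (μ u') (ν u') - W1 (μ u) (ν u) + W1 (μ u) (ν u))
        = fun u' => W1 (μ u') (ν u') := by ext u'; ring
    rw [heq] at this
    exact this
  -- globalized integrand
  have hFcont : Continuous (fun r : ℝ => W1 (μ (max r 0)) (ν (max r 0))) :=
    hfcont.comp_continuous (continuous_id.max continuous_const)
      (fun x => mem_Ici.2 (le_max_right _ _))
  have hFnn : ∀ r : ℝ, 0 ≤ W1 (μ (max r 0)) (ν (max r 0)) := fun r => hfnn _
  have hFeq : ∀ v : ℝ, 0 ≤ v → W1 (μ (max v 0)) (ν (max v 0)) = W1 (μ v) (ν v) := by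
    intro v hv; rw [max_eq_left hv]
  have hIeq : ∀ t : ℝ, 0 ≤ t →
      (∫ v in (0:ℝ)..t, W1 (μ (max v 0)) (ν (max v 0))) = ∫ v in (0:ℝ)..t, W1 (μ v) (ν v) := by
    intro t ht
    apply intervalIntegral.integral_congr
    intro v hv
    rw [uIcc_of_le ht] at hv
    exact hFeq v hv.1
  have hdriftF : ∀ u : ℝ, 0 ≤ u → ∀ y : Rd d,
      ‖(∫ σ, K y σ ∂(μ u)) - ∫ σ, K y σ ∂(ν u)‖ ≤ L * W1 (μ (max u 0)) (ν (max u 0)) := by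
    intro u hu y; rw [hFeq u hu]; exact hdrift u hu y
  have hcomp : ∀ t : ℝ, 0 ≤ t → ∀ x : Rd d, ∀ r ∈ Icc (0:ℝ) t,
      ‖Tfμ r x - Tfν r x‖
        ≤ L * Real.exp (L*t) * ∫ v in (0:ℝ)..t, W1 (μ (max v 0)) (ν (max v 0)) :=
    fun t ht x => flow_compare hL hK hμprob hνprob hμint hνint hμTf0 hνTf0 hμderiv hνderiv
      hcontμ hcontν hFcont hFnn hdriftF ht x
  have hGcomp : ∀ t : ℝ, 0 ≤ t → ∀ σ : Hist τ d,
      dist (Gμ t σ) (Gν t σ)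
        ≤ L * Real.exp (L*t) * ∫ v in (0:ℝ)..t, W1 (μ (max v 0)) (ν (max v 0)) := by
    intro t ht σ
    have hInn : 0 ≤ ∫ v in (0:ℝ)..t, W1 (μ (max v 0)) (ν (max v 0)) :=
      intervalIntegral.integral_nonneg ht (fun v _ => hFnn v)
    rw [ContinuousMap.dist_le (by positivity)]
    intro s
    have hs1 : -τ ≤ (s:ℝ) := s.2.1
    have hs2 : (s:ℝ) ≤ 0 := s.2.2
    rcases le_or_gt (t + (s:ℝ)) 0 with hc | hc
    · have hmem : t + (s:ℝ) ∈ Icc (-τ) (0:ℝ) := ⟨by linarith, hc⟩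
      rw [(hμres t ht σ s).1 ⟨_, hmem⟩ rfl, (hνres t ht σ s).1 ⟨_, hmem⟩ rfl]
      rw [dist_self]
      positivity
    · have hz0 : (0:ℝ) ∈ Icc (-τ) (0:ℝ) := ⟨by linarith, le_refl 0⟩
      rw [(hμres t ht σ s).2 hc ⟨0,hz0⟩ rfl, (hνres t ht σ s).2 hc ⟨0,hz0⟩ rfl]
      rw [dist_eq_norm]
      exact hcomp t ht (σ ⟨0,hz0⟩) (t + (s:ℝ)) ⟨hc.le, by linarith⟩
  -- PART 1
  have part1 : ∀ t : ℝ, 0 ≤ t →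
      W1 (μ t) (ν t) ≤ Real.exp (L*t) * W1 μin νin
        + L * Real.exp (L*t) * ∫ r in (0:ℝ)..t, W1 (μ r) (ν r) := by
    intro t ht
    obtain ⟨C, hCR, hall⟩ := hsuppall t ht
    obtain ⟨⟨hmt, hnt⟩, hbμt, hbνt⟩ := hall t ⟨ht, le_rfl⟩
    haveI := hμprob t; haveI := hνprob t
    apply csSup_le ⟨0, W1_zero_mem _ _⟩
    rintro a ⟨φ, hφ, rfl⟩
    have e1 : ∫ x, φ x ∂(μ t) = ∫ σ, φ (Gμ t σ) ∂μin := by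
      rw [hμfix t ht]
      exact integral_map (hμGmeas t).aemeasurable hφ.continuous.aestronglyMeasurable
    have e2 : ∫ x, φ x ∂(ν t) = ∫ σ, φ (Gν t σ) ∂νin := by
      rw [hνfix t ht]
      exact integral_map (hνGmeas t).aemeasurable hφ.continuous.aestronglyMeasurable
    have i1 : Integrable (fun σ => φ (Gμ t σ)) μin :=
      comp_integrable hμsupp (hμGmeas t) hbμt hφ
    have i2 : Integrable (fun σ => φ (Gμ t σ)) νin :=
      comp_integrable hνsupp (hμGmeas t) hbμt hφ
    have i3 : Integrable (fun σ => φ (Gν t σ)) νin :=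
      comp_integrable hνsupp (hνGmeas t) hbνt hφ
    have key1 : (∫ σ, φ (Gμ t σ) ∂μin) - (∫ σ, φ (Gμ t σ) ∂νin)
        ≤ Real.exp (L*t) * W1 μin νin := by
      apply le_W1_scaled hμsupp hνsupp (Real.exp_pos _)
      intro σ σ'
      have h1 := hφ.dist_le_mul (Gμ t σ) (Gμ t σ')
      rw [NNReal.coe_one, one_mul] at h1
      exact h1.trans (hGlipμ t ht σ σ')
    have hInn : 0 ≤ ∫ v in (0:ℝ)..t, W1 (μ (max v 0)) (ν (max v 0)) :=
      intervalIntegral.integral_nonneg ht (fun v _ => hFnn v)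
    have key2 : (∫ σ, φ (Gμ t σ) ∂νin) - (∫ σ, φ (Gν t σ) ∂νin)
        ≤ L * Real.exp (L*t) * ∫ v in (0:ℝ)..t, W1 (μ (max v 0)) (ν (max v 0)) := by
      rw [← integral_sub i2 i3]
      have hle : ∀ σ, φ (Gμ t σ) - φ (Gν t σ)
          ≤ L * Real.exp (L*t) * ∫ v in (0:ℝ)..t, W1 (μ (max v 0)) (ν (max v 0)) := by
        intro σ
        have h1 := hφ.dist_le_mul (Gμ t σ) (Gν t σ)
        rw [NNReal.coe_one, one_mul] at h1
        have h2 := hGcomp t ht σ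
        have h3 : φ (Gμ t σ) - φ (Gν t σ) ≤ dist (φ (Gμ t σ)) (φ (Gν t σ)) := by
          rw [Real.dist_eq]; exact le_abs_self _
        linarith
      calc ∫ σ, (φ (Gμ t σ) - φ (Gν t σ)) ∂νin
          ≤ ∫ _σ, (L * Real.exp (L*t) * ∫ v in (0:ℝ)..t, W1 (μ (max v 0)) (ν (max v 0))) ∂νin :=
            integral_mono (i2.sub i3) (integrable_const _) hle
        _ = L * Real.exp (L*t) * ∫ v in (0:ℝ)..t, W1 (μ (max v 0)) (ν (max v 0)) := by simp
    rw [e1, e2]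
    rw [hIeq t ht] at key2
    linarith
  refine ⟨part1, ⟨fun t => Real.exp (L*t) * Real.exp (L*t*Real.exp (L*t)), ?_, ?_, ?_, ?_, ?_⟩⟩
  · exact (Real.continuous_exp.comp (continuous_const.mul continuous_id)).mul
      (Real.continuous_exp.comp ((continuous_const.mul continuous_id).mul
        (Real.continuous_exp.comp (continuous_const.mul continuous_id))))
  · intro a ha b hb hab
    have ha0 : (0:ℝ) ≤ a := ha
    have hb0 : (0:ℝ) ≤ b := le_trans ha0 hab
    have hLab : L*a ≤ L*b := mul_le_mul_of_nonneg_left hab hL.le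
    have h1 : Real.exp (L*a) ≤ Real.exp (L*b) := Real.exp_le_exp.2 hLab
    have h2 : L*a*Real.exp (L*a) ≤ L*b*Real.exp (L*b) :=
      mul_le_mul hLab h1 (Real.exp_pos _).le (mul_nonneg hL.le hb0)
    have h3 : Real.exp (L*a*Real.exp (L*a)) ≤ Real.exp (L*b*Real.exp (L*b)) :=
      Real.exp_le_exp.2 h2
    exact mul_le_mul h1 h3 (Real.exp_pos _).le (Real.exp_pos _).le
  · simp
  · intro t ht
    have h1 : (1:ℝ) ≤ Real.exp (L*t) := Real.one_le_exp (by positivity)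
    have h2 : (1:ℝ) ≤ Real.exp (L*t*Real.exp (L*t)) := Real.one_le_exp (by positivity)
    calc (1:ℝ) = 1*1 := by ring
      _ ≤ Real.exp (L*t) * Real.exp (L*t*Real.exp (L*t)) :=
          mul_le_mul h1 h2 zero_le_one (le_trans zero_le_one h1)
  · intro T hT
    have hu' : ∀ s : ℝ, HasDerivAt
        (fun v => ∫ x in (0:ℝ)..v, W1 (μ (max x 0)) (ν (max x 0)))
        (W1 (μ (max s 0)) (ν (max s 0))) s := fun s =>
      intervalIntegral.integral_hasDerivAt_right (hFcont.intervalIntegrable _ _)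
        hFcont.aestronglyMeasurable.stronglyMeasurableAtFilter hFcont.continuousAt
    have hunn : ∀ s : ℝ, 0 ≤ s → 0 ≤ ∫ x in (0:ℝ)..s, W1 (μ (max x 0)) (ν (max x 0)) :=
      fun s hs => intervalIntegral.integral_nonneg hs (fun v _ => hFnn v)
    have key := norm_le_gronwallBound_of_norm_deriv_right_le
      (f := fun v => ∫ x in (0:ℝ)..v, W1 (μ (max x 0)) (ν (max x 0)))
      (f' := fun s => W1 (μ (max s 0)) (ν (max s 0)))
      (a := 0) (b := T) (δ := 0) (K := L * Real.exp (L*T))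
      (ε := Real.exp (L*T) * W1 μin νin)
      (fun v _ => (hu' v).continuousAt.continuousWithinAt)
      (fun v _ => (hu' v).hasDerivWithinAt)
      (by simp) ?_ T ⟨hT, le_rfl⟩
    swap
    · intro s hs
      have h0s : (0:ℝ) ≤ s := hs.1
      have hp1 := part1 s h0s
      have hIs := hIeq s h0s
      rw [Real.norm_eq_abs, abs_of_nonneg (hFnn s), Real.norm_eq_abs,
        abs_of_nonneg (hunn s h0s), hFeq s h0s]
      have hee : Real.exp (L*s) ≤ Real.exp (L*T) := Real.exp_le_exp.2 (by nlinarith [hs.2])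
      have hIsnn : 0 ≤ ∫ r in (0:ℝ)..s, W1 (μ r) (ν r) := by
        rw [← hIs]; exact hunn s h0s
      have hh1 : Real.exp (L*s) * W1 μin νin ≤ Real.exp (L*T) * W1 μin νin :=
        mul_le_mul_of_nonneg_right hee hAnn
      have hh2 : L * Real.exp (L*s) * (∫ r in (0:ℝ)..s, W1 (μ r) (ν r))
          ≤ L * Real.exp (L*T) * (∫ r in (0:ℝ)..s, W1 (μ r) (ν r)) :=
        mul_le_mul_of_nonneg_right (by nlinarith) hIsnn
      rw [← hIs] at hh2
      have := hp1
      rw [← hIs] at this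
      linarith
    have hKne : L * Real.exp (L*T) ≠ 0 := by positivity
    rw [gronwallBound_of_K_ne_0 hKne, sub_zero, Real.norm_eq_abs,
      abs_of_nonneg (hunn T hT)] at key
    simp only [zero_mul, zero_add] at key
    have hexparg : L * Real.exp (L*T) * T = L*T*Real.exp (L*T) := by ring
    rw [hexparg] at key
    have hKpos : (0:ℝ) < L * Real.exp (L*T) := by positivity
    have calc1 : L * Real.exp (L*T) * (∫ x in (0:ℝ)..T, W1 (μ (max x 0)) (ν (max x 0)))
        ≤ Real.exp (L*T) * W1 μin νin * (Real.exp (L*T*Real.exp (L*T)) - 1) := by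
      have h5 := mul_le_mul_of_nonneg_left key hKpos.le
      have h6 : L * Real.exp (L*T) *
          (Real.exp (L*T) * W1 μin νin / (L * Real.exp (L*T))
            * (Real.exp (L*T*Real.exp (L*T)) - 1))
          = Real.exp (L*T) * W1 μin νin * (Real.exp (L*T*Real.exp (L*T)) - 1) := by
        field_simp
      rw [h6] at h5
      exact h5
    have hp1T := part1 T hT
    rw [← hIeq T hT] at hp1T
    have hexp1 : (1:ℝ) ≤ Real.exp (L*T*Real.exp (L*T)) := Real.one_le_exp (by positivity)
    show W1 (μ T) (ν T) ≤ Real.exp (L*T) * Real.exp (L*T*Real.exp (L*T)) * W1 μin νin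
    nlinarith [Real.exp_pos (L*T), Real.exp_pos (L*T*Real.exp (L*T))]
end
end

section
/- Coherence of the two delayed mean-field descriptions: suppose the path kernel is K(x,σ) = ∫_{-τ}^0 K̃(x, σ(s)) dρ(s) with K̃ globally Lipschitz and ρ ∈ P([-τ,0]). Let μ(t) ∈ P(E) be the unique fixed-point solution μ(t) = (res[t]∘ext[μ])#μ(0) with μ(0) supported in B(0,R₀) ⊂ E. Then μ̃(t) := ev(0)#μ(t) ∈ P(ℝ^d) is the unique solution of ∂_t μ̃ + div(F̃[μ̃] μ̃) = 0 with initial condition μ̃(s) = ev(s)#μ(0) for s ∈ [-τ,0]; moreover the vector fields coincide: F[μ](t,x) = F̃[μ̃](t,x) for all t ≥ 0, x ∈ ℝ^d. -/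
open MeasureTheory Set

set_option maxHeartbeats 1000000
set_option synthInstance.maxHeartbeats 200000

noncomputable section

lemma myGron {d : ℕ} {L ε δ a b : ℝ} (ha : 0 ≤ a) {f F : ℝ → Rd d}
    (hf : ∀ t, 0 ≤ t → HasDerivWithinAt f (F t) (Ici (0:ℝ)) t)
    (hδ : ‖f a‖ ≤ δ)
    (hb : ∀ t ∈ Ico a b, ‖F t‖ ≤ L * ‖f t‖ + ε) :
    ∀ t ∈ Icc a b, ‖f t‖ ≤ gronwallBound δ L ε (t - a) := by
  apply norm_le_gronwallBound_of_norm_deriv_right_le (f' := F) _ _ hδ hb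
  · intro t ht
    exact ((hf t (ha.trans ht.1)).continuousWithinAt).mono (fun u hu => ha.trans hu.1)
  · intro t ht
    exact (hf t (ha.trans ht.1)).mono (fun u hu => (ha.trans ht.1).trans hu)

lemma flow_lip_s19 {d : ℕ} {L : ℝ} {v S : ℝ → Rd d → Rd d}
    (hv : ∀ t, 0 ≤ t → ∀ x y, ‖v t x - v t y‖ ≤ L * ‖x - y‖)
    (hS0 : ∀ x, S 0 x = x)
    (hS : ∀ x, ∀ t : ℝ, 0 ≤ t → HasDerivWithinAt (fun r => S r x) (v t (S t x)) (Ici (0:ℝ)) t) :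
    ∀ t : ℝ, 0 ≤ t → ∀ x y, ‖S t x - S t y‖ ≤ Real.exp (L * t) * ‖x - y‖ := by
  intro t ht x y
  have h := myGron (a := 0) (b := t) (δ := ‖x - y‖) (ε := 0) le_rfl
    (f := fun r => S r x - S r y) (F := fun r => v r (S r x) - v r (S r y))
    (fun r hr => ((hS x r hr).sub (hS y r hr)))
    (by simp [hS0])
    (fun r hr => by
      have := hv r hr.1 (S r x) (S r y)
      simpa using this)
  have h2 := h t ⟨ht, le_rfl⟩
  rw [sub_zero, gronwallBound_ε0] at h2
  calc ‖S t x - S t y‖ ≤ ‖x - y‖ * Real.exp (L * t) := h2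
    _ = Real.exp (L * t) * ‖x - y‖ := mul_comm _ _




/-- The uniform representation map: `m u = μin.map (famPhi τ S u)` for `u ≥ -τ`. -/
def famPhi (τ : ℝ) {d : ℕ} (S : ℝ → Rd d → Rd d) (h0 : -τ ≤ (0:ℝ)) (u : ℝ)
    (σ : Hist τ d) : Rd d :=
  if u ≤ 0 then σ (projIcc (-τ) 0 h0 u) else S (max u 0) (σ ⟨0, ⟨h0, le_rfl⟩⟩)

lemma famPhi_meas (τ : ℝ) {d : ℕ} (S : ℝ → Rd d → Rd d) (h0 : -τ ≤ (0:ℝ))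
    [MeasurableSpace (Hist τ d)] [BorelSpace (Hist τ d)]
    (hS : ∀ u, Measurable (S u)) (u : ℝ) : Measurable (famPhi τ S h0 u) := by
  unfold famPhi
  split_ifs with h
  · exact (continuous_eval_const _).measurable
  · exact (hS _).comp (continuous_eval_const _).measurable

lemma famPhi_cont (τ : ℝ) {d : ℕ} (S : ℝ → Rd d → Rd d) (h0 : -τ ≤ (0:ℝ))
    (hS0 : ∀ x, S 0 x = x)
    (hScont : ∀ x, ContinuousOn (fun r => S r x) (Ici (0:ℝ)))
    (σ : Hist τ d) : Continuous (fun u => famPhi τ S h0 u σ) := by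
  unfold famPhi
  apply Continuous.if_le
  · exact σ.continuous.comp (continuous_projIcc)
  · exact (hScont (σ ⟨0, ⟨h0, le_rfl⟩⟩)).comp_continuous
      (continuous_id.max continuous_const) (fun u => mem_Ici.mpr (le_max_right _ _))
  · exact continuous_id
  · exact continuous_const
  · intro u hu
    simp only [hu, max_self]
    rw [hS0]
    congr 1
    exact projIcc_of_mem h0 ⟨by linarith, le_rfl⟩

/-- `m u = μin.map (famPhi u)` for `u ∈ [-τ, ∞)`. -/
lemma fam_rep (τ : ℝ) {d : ℕ} [MeasurableSpace (Hist τ d)] [BorelSpace (Hist τ d)]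
    (S : ℝ → Rd d → Rd d) (h0 : -τ ≤ (0:ℝ))
    (μin : Measure (Hist τ d)) (m : ℝ → Measure (Rd d))
    (hmneg : ∀ s : Set.Icc (-τ) (0:ℝ), m (s:ℝ) = μin.map (fun σ : Hist τ d => σ s))
    (hmmap : ∀ u : ℝ, 0 ≤ u → m u = (m 0).map (S u))
    (hSmeas : ∀ u, Measurable (S u)) :
    ∀ u : ℝ, -τ ≤ u → m u = μin.map (famPhi τ S h0 u) := by
  intro u hu
  rcases le_or_gt u 0 with h | h
  · have : famPhi τ S h0 u = fun σ : Hist τ d => σ ⟨u, ⟨hu, h⟩⟩ := by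
      funext σ
      simp only [famPhi, if_pos h]
      congr 1
      exact projIcc_of_mem h0 ⟨hu, h⟩
    rw [this]
    exact hmneg ⟨u, ⟨hu, h⟩⟩
  · have hmax : max u 0 = u := max_eq_left h.le
    have : famPhi τ S h0 u = fun σ : Hist τ d =>
        S u (σ ⟨0, ⟨h0, le_rfl⟩⟩) := by
      funext σ
      simp only [famPhi, if_neg (not_le.mpr h), hmax]
    rw [this, hmmap u h.le]
    have h00 : m 0 = μin.map (fun σ : Hist τ d => σ (⟨0, ⟨h0, le_rfl⟩⟩ : Set.Icc (-τ) (0:ℝ))) :=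
      hmneg ⟨0, ⟨h0, le_rfl⟩⟩
    rw [h00, Measure.map_map (hSmeas u) (continuous_eval_const _).measurable]
    rfl

/-- strong measurability in `s` of the inner integral of the delayed field. -/
lemma fam_meas (τ : ℝ) {d : ℕ} [MeasurableSpace (Hist τ d)] [BorelSpace (Hist τ d)]
    (Kt : Rd d → Rd d → Rd d) (hKtc : ∀ x, Continuous (Kt x))
    (S : ℝ → Rd d → Rd d) (h0 : -τ ≤ (0:ℝ))
    (μin : Measure (Hist τ d)) [SFinite μin] (m : ℝ → Measure (Rd d))
    (hmneg : ∀ s : Set.Icc (-τ) (0:ℝ), m (s:ℝ) = μin.map (fun σ : Hist τ d => σ s))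
    (hmmap : ∀ u : ℝ, 0 ≤ u → m u = (m 0).map (S u))
    (hSmeas : ∀ u, Measurable (S u)) (hS0 : ∀ x, S 0 x = x)
    (hScont : ∀ x, ContinuousOn (fun r => S r x) (Ici (0:ℝ)))
    (t : ℝ) (ht : 0 ≤ t) (x : Rd d) :
    StronglyMeasurable (fun s : Set.Icc (-τ) (0:ℝ) => ∫ z, Kt x z ∂ (m (t + s))) := by
  have hunc : StronglyMeasurable (Function.uncurry (fun u (σ : Hist τ d) => famPhi τ S h0 u σ)) :=
    stronglyMeasurable_uncurry_of_continuous_of_stronglyMeasurable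
      (fun σ => famPhi_cont τ S h0 hS0 hScont σ)
      (fun u => (famPhi_meas τ S h0 hSmeas u).stronglyMeasurable)
  have hF : StronglyMeasurable (fun p : Set.Icc (-τ) (0:ℝ) × Hist τ d =>
      Kt x (famPhi τ S h0 (t + p.1) p.2)) := by
    have h1 : Measurable (fun p : Set.Icc (-τ) (0:ℝ) × Hist τ d =>
        ((t + (p.1 : ℝ), p.2) : ℝ × Hist τ d)) :=
      ((measurable_const.add (measurable_subtype_coe.comp measurable_fst))).prodMk
        measurable_snd
    exact (hKtc x).comp_stronglyMeasurable (hunc.comp_measurable h1)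
  have key : StronglyMeasurable (fun s : Set.Icc (-τ) (0:ℝ) =>
      ∫ σ, Kt x (famPhi τ S h0 (t + s) σ) ∂μin) := hF.integral_prod_right' (ν := μin)
  have heq : (fun s : Set.Icc (-τ) (0:ℝ) => ∫ z, Kt x z ∂ (m (t + s)))
      = fun s : Set.Icc (-τ) (0:ℝ) => ∫ σ, Kt x (famPhi τ S h0 (t + s) σ) ∂μin := by
    funext s
    rw [fam_rep τ S h0 μin m hmneg hmmap hSmeas (t + s) (by
      have h2 := s.2.1; linarith)]
    exact integral_map (famPhi_meas τ S h0 hSmeas _).aemeasurable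
      (hKtc x).aestronglyMeasurable
  rw [heq]
  exact key


section
variable {d : ℕ} {τ L R₀ : ℝ} [MeasurableSpace (Hist τ d)] [BorelSpace (Hist τ d)]
  {S : ℝ → Rd d → Rd d}
  {μin : Measure (Hist τ d)} {m : ℝ → Measure (Rd d)}
/-- uniform support bound for the family `m` on a time window. -/
lemma fam_supp (h0 : -τ ≤ (0:ℝ)) (hL : 0 ≤ L) (hR : 0 ≤ R₀)
    (hmneg : ∀ s : Set.Icc (-τ) (0:ℝ), m (s:ℝ) = μin.map (fun σ : Hist τ d => σ s))
    (hmmap : ∀ u : ℝ, 0 ≤ u → m u = (m 0).map (S u))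
    (hSmeas : ∀ u, Measurable (S u))
    (hScont : ∀ x, ContinuousOn (fun r => S r x) (Ici (0:ℝ)))
    (hSlip : ∀ u : ℝ, 0 ≤ u → ∀ x y, ‖S u x - S u y‖ ≤ Real.exp (L * u) * ‖x - y‖)
    (hsupp : μin (Metric.closedBall (0 : Hist τ d) R₀)ᶜ = 0)
    (t : ℝ) (ht : 0 ≤ t) :
    ∃ Rm : ℝ, 0 ≤ Rm ∧ ∀ u : ℝ, -τ ≤ u → u ≤ t → ∀ᵐ z ∂(m u), ‖z‖ ≤ Rm := by
  obtain ⟨C, hC⟩ := (isCompact_Icc (a := (0:ℝ)) (b := t)).exists_bound_of_continuousOn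
    ((hScont 0).mono Icc_subset_Ici_self)
  refine ⟨max R₀ (C + Real.exp (L * t) * R₀), le_max_of_le_left hR, ?_⟩
  intro u hu hut
  rw [fam_rep τ S h0 μin m hmneg hmmap hSmeas u hu]
  rw [ae_map_iff (famPhi_meas τ S h0 hSmeas u).aemeasurable
    (isClosed_le (continuous_norm) continuous_const).measurableSet]
  have hin : ∀ᵐ σ ∂μin, ‖σ‖ ≤ R₀ := by
    rw [ae_iff]
    have hset : {σ : Hist τ d | ¬ ‖σ‖ ≤ R₀} = (Metric.closedBall (0 : Hist τ d) R₀)ᶜ := by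
      ext σ; simp [Metric.mem_closedBall, dist_zero_right]
    rw [hset]
    exact hsupp
  filter_upwards [hin] with σ hσ
  unfold famPhi
  split_ifs with h
  · exact le_max_of_le_left ((σ.norm_coe_le_norm _).trans hσ)
  · have hmax : (0:ℝ) ≤ max u 0 := le_max_right _ _
    have hmaxt : max u 0 ≤ t := max_le hut ht
    have h1 : ‖S (max u 0) (σ ⟨0, ⟨h0, le_rfl⟩⟩)‖
        ≤ ‖S (max u 0) 0‖ + Real.exp (L * max u 0) * ‖σ ⟨0, ⟨h0, le_rfl⟩⟩‖ := by
      have := hSlip (max u 0) hmax (σ ⟨0, ⟨h0, le_rfl⟩⟩) 0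
      rw [sub_zero] at this
      calc ‖S (max u 0) (σ ⟨0, ⟨h0, le_rfl⟩⟩)‖
          = ‖S (max u 0) 0 + (S (max u 0) (σ ⟨0, ⟨h0, le_rfl⟩⟩) - S (max u 0) 0)‖ := by
            rw [add_sub_cancel]
        _ ≤ ‖S (max u 0) 0‖ + ‖S (max u 0) (σ ⟨0, ⟨h0, le_rfl⟩⟩) - S (max u 0) 0‖ :=
            norm_add_le _ _
        _ ≤ _ := by gcongr
    refine le_max_of_le_right (h1.trans ?_)
    have h2 : ‖σ ⟨0, ⟨h0, le_rfl⟩⟩‖ ≤ R₀ := (σ.norm_coe_le_norm _).trans hσ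
    have h3 : Real.exp (L * max u 0) ≤ Real.exp (L * t) :=
      Real.exp_le_exp.mpr (by nlinarith)
    exact add_le_add (hC _ ⟨hmax, hmaxt⟩)
      (mul_le_mul h3 h2 (norm_nonneg _) (Real.exp_nonneg _))

end


section
variable {d : ℕ} {τ L : ℝ} {Kt : Rd d → Rd d → Rd d}
  {m : ℝ → Measure (Rd d)} {ρ : Measure (Set.Icc (-τ) (0:ℝ))}

/-- Integrability over `ρ` of the inner integrals, given measurability and a support bound. -/
lemma fam_int [IsProbabilityMeasure ρ] (hL : 0 ≤ L)
    (hKty : ∀ x y y', ‖Kt x y - Kt x y'‖ ≤ L * ‖y - y'‖)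
    (hprob : ∀ u, IsProbabilityMeasure (m u))
    {t : ℝ} (ht : 0 ≤ t) {Rm : ℝ}
    (hRm : ∀ u : ℝ, -τ ≤ u → u ≤ t → ∀ᵐ z ∂(m u), ‖z‖ ≤ Rm)
    (x : Rd d)
    (hmeas : StronglyMeasurable (fun s : Set.Icc (-τ) (0:ℝ) => ∫ z, Kt x z ∂ (m (t + s)))) :
    Integrable (fun s : Set.Icc (-τ) (0:ℝ) => ∫ z, Kt x z ∂ (m (t + s))) ρ := by
  refine (integrable_const (‖Kt x 0‖ + L * Rm)).mono' hmeas.aestronglyMeasurable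
    (ae_of_all _ (fun s => ?_))
  have hb : ∀ᵐ z ∂(m (t + s)), ‖Kt x z‖ ≤ ‖Kt x 0‖ + L * Rm := by
    filter_upwards [hRm (t + s) (by have := s.2.1; linarith) (by have := s.2.2; linarith)]
      with z hz
    calc ‖Kt x z‖ = ‖Kt x 0 + (Kt x z - Kt x 0)‖ := by rw [add_sub_cancel]
      _ ≤ ‖Kt x 0‖ + ‖Kt x z - Kt x 0‖ := norm_add_le _ _
      _ ≤ ‖Kt x 0‖ + L * ‖z - 0‖ := by gcongr; exact hKty x z 0
      _ ≤ ‖Kt x 0‖ + L * Rm := by rw [sub_zero]; gcongr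
  calc ‖∫ z, Kt x z ∂ (m (t + s))‖ ≤ ∫ _, (‖Kt x 0‖ + L * Rm) ∂ (m (t + s)) :=
        norm_integral_le_of_norm_le (integrable_const _) hb
    _ = ‖Kt x 0‖ + L * Rm := by
        haveI := hprob (t + s)
        simp

/-- Lipschitz bound for the delayed field, robust to junk values. -/
lemma fam_lip_weak [IsProbabilityMeasure ρ] (hL : 0 ≤ L)
    (hKtx : ∀ x x' y, ‖Kt x y - Kt x' y‖ ≤ L * ‖x - x'‖)
    (hprob : ∀ u, IsProbabilityMeasure (m u))
    (hmi : ∀ u x, Integrable (fun y => Kt x y) (m u))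
    (t : ℝ)
    (hmeas : ∀ x : Rd d,
      StronglyMeasurable (fun s : Set.Icc (-τ) (0:ℝ) => ∫ z, Kt x z ∂ (m (t + s))))
    (y y' : Rd d) :
    ‖(∫ s : Set.Icc (-τ) (0:ℝ), (∫ z, Kt y z ∂ (m (t + s))) ∂ρ)
      - ∫ s : Set.Icc (-τ) (0:ℝ), (∫ z, Kt y' z ∂ (m (t + s))) ∂ρ‖ ≤ L * ‖y - y'‖ := by
  set g : Rd d → Set.Icc (-τ) (0:ℝ) → Rd d :=
    fun y s => ∫ z, Kt y z ∂ (m (t + s)) with hg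
  have hpt : ∀ (a b : Rd d) (s : Set.Icc (-τ) (0:ℝ)), ‖g a s - g b s‖ ≤ L * ‖a - b‖ := by
    intro a b s
    rw [hg]
    simp only
    rw [← integral_sub (hmi _ a) (hmi _ b)]
    haveI := hprob (t + s)
    calc ‖∫ z, (Kt a z - Kt b z) ∂ (m (t + s))‖ ≤ ∫ _, L * ‖a - b‖ ∂ (m (t + s)) :=
          norm_integral_le_of_norm_le (integrable_const _) (ae_of_all _ fun z => hKtx a b z)
      _ = L * ‖a - b‖ := by simp
  have hdint : ∀ a b : Rd d, Integrable (fun s => g a s - g b s) ρ := by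
    intro a b
    exact (integrable_const (L * ‖a - b‖)).mono'
      ((hmeas a).sub (hmeas b)).aestronglyMeasurable (ae_of_all _ fun s => hpt a b s)
  by_cases h : Integrable (g y) ρ
  · have h' : Integrable (g y') ρ := by
      have heq : g y' = fun s => g y s + (g y' s - g y s) := by funext s; abel
      rw [heq]
      exact h.add (hdint y' y)
    rw [← integral_sub h h']
    calc ‖∫ s, (g y s - g y' s) ∂ρ‖ ≤ ∫ _, L * ‖y - y'‖ ∂ρ :=
          norm_integral_le_of_norm_le (integrable_const _) (ae_of_all _ fun s => hpt y y' s)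
      _ = L * ‖y - y'‖ := by simp
  · have h' : ¬ Integrable (g y') ρ := by
      intro h'
      apply h
      have heq : g y = fun s => g y' s + (g y s - g y' s) := by funext s; abel
      rw [heq]
      exact h'.add (hdint y y')
    rw [integral_undef h, integral_undef h', sub_zero, norm_zero]
    positivity
end
lemma cont_integrable {d : ℕ} {X : Type*} [MeasurableSpace X] [TopologicalSpace X]
    [OpensMeasurableSpace X] [CompactSpace X] [SecondCountableTopology X]
    {f : X → Rd d} (hf : Continuous f) (m : Measure X) [IsFiniteMeasure m] :
    Integrable f m := by
  obtain ⟨C, hC⟩ := isCompact_univ.exists_bound_of_continuousOn hf.continuousOn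
  exact (integrable_const C).mono' hf.stronglyMeasurable.aestronglyMeasurable
    (ae_of_all _ fun x => hC x (mem_univ x))

theorem stmt19 {d : ℕ} (τ L R₀ : ℝ) (hτ : 0 < τ) (hL : 0 < L) (hR : 0 < R₀)
    [MeasurableSpace (Hist τ d)] [BorelSpace (Hist τ d)]
    -- the path kernel K is given by averaging the point kernel K̃ against ρ
    (Kt : Rd d → Rd d → Rd d)
    (hKt : ∀ x x' y y', ‖Kt x y - Kt x' y'‖ ≤ L * (‖x - x'‖ + ‖y - y'‖))
    (ρ : Measure (Set.Icc (-τ) (0:ℝ))) [IsProbabilityMeasure ρ]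
    (K : Rd d → Hist τ d → Rd d)
    (hKdef : ∀ x (σ : Hist τ d), K x σ = ∫ s, Kt x (σ s) ∂ρ)
    -- μ is the unique fixed-point solution with initial datum supported in B(0,R₀)
    (μin : Measure (Hist τ d)) [IsProbabilityMeasure μin]
    (μ : ℝ → Measure (Hist τ d))
    (Tf : ℝ → Rd d → Rd d) (G : ℝ → Hist τ d → Hist τ d)
    (hμ : IsFixedPointSol τ R₀ K μin μ Tf G)
    -- μ̃(t) = ev(0) # μ(t) for t ≥ 0 and μ̃(s) = ev(s) # μ(0) for s ∈ [-τ,0]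
    (μt : ℝ → Measure (Rd d))
    (hμtp : ∀ t, IsProbabilityMeasure (μt t))
    (hμt0 : ∀ t : ℝ, 0 ≤ t → ∀ z : Set.Icc (-τ) (0:ℝ), (z:ℝ) = 0 →
      μt t = (μ t).map (fun σ : Hist τ d => σ z))
    (hμtneg : ∀ s : Set.Icc (-τ) (0:ℝ), μt (s:ℝ) = (μ 0).map (fun σ : Hist τ d => σ s))
    (hμti : ∀ t x, Integrable (fun y => Kt x y) (μt t)) :
    -- the vector fields F[μ] and F̃[μ̃] coincide
    (∀ t : ℝ, 0 ≤ t → ∀ x : Rd d,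
      ∫ σ, K x σ ∂(μ t)
        = ∫ s : Set.Icc (-τ) (0:ℝ), (∫ y, Kt x y ∂(μt (t + (s:ℝ)))) ∂ρ) ∧
    -- μ̃ solves the transport equation : it is the push-forward along the flow of F̃[μ̃]
    (∃ S : ℝ → Rd d → Rd d,
      (∀ x, S 0 x = x) ∧
      (∀ x, ∀ t : ℝ, 0 ≤ t →
        HasDerivWithinAt (fun r => S r x)
          (∫ s : Set.Icc (-τ) (0:ℝ), (∫ y, Kt (S t x) y ∂(μt (t + (s:ℝ)))) ∂ρ)
          (Set.Ici (0:ℝ)) t) ∧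
      (∀ t, Measurable (S t)) ∧
      (∀ t : ℝ, 0 ≤ t → μt t = (μt 0).map (S t))) ∧
    -- and it is the unique such solution with this initial condition
    (∀ (ν : ℝ → Measure (Rd d)) (S' : ℝ → Rd d → Rd d),
      (∀ t, IsProbabilityMeasure (ν t)) →
      (∀ t x, Integrable (fun y => Kt x y) (ν t)) →
      (∀ s : Set.Icc (-τ) (0:ℝ), ν (s:ℝ) = μt (s:ℝ)) →
      (∀ x, S' 0 x = x) →
      (∀ x, ∀ t : ℝ, 0 ≤ t →
        HasDerivWithinAt (fun r => S' r x)
          (∫ s : Set.Icc (-τ) (0:ℝ), (∫ y, Kt (S' t x) y ∂(ν (t + (s:ℝ)))) ∂ρ)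
          (Set.Ici (0:ℝ)) t) →
      (∀ t, Measurable (S' t)) →
      (∀ t : ℝ, 0 ≤ t → ν t = (ν 0).map (S' t)) →
      ∀ t : ℝ, 0 ≤ t → ν t = μt t) := by
  obtain ⟨hμprob, hμ0, hsupp, hKint, hTf0, hTfD, hGmeas, hres, hfix⟩ := hμ
  have h0 : -τ ≤ (0:ℝ) := by linarith
  set z0 : Set.Icc (-τ) (0:ℝ) := ⟨0, ⟨h0, le_rfl⟩⟩ with hz0def
  have hz0c : ((z0 : Set.Icc (-τ) (0:ℝ)) : ℝ) = 0 := rfl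
  have evm : ∀ s : Set.Icc (-τ) (0:ℝ), Measurable (fun σ : Hist τ d => σ s) :=
    fun s => (continuous_eval_const s).measurable
  have hL0 : 0 ≤ L := hL.le
  have hKtx : ∀ x x' y : Rd d, ‖Kt x y - Kt x' y‖ ≤ L * ‖x - x'‖ := fun x x' y => by
    simpa using hKt x x' y y
  have hKty : ∀ x y y' : Rd d, ‖Kt x y - Kt x y'‖ ≤ L * ‖y - y'‖ := fun x y y' => by
    simpa using hKt x x y y'
  have hKtc : ∀ x, Continuous (Kt x) := by
    intro x
    refine (LipschitzWith.of_dist_le_mul (K := L.toNNReal) (fun y y' => ?_)).continuous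
    rw [Real.coe_toNNReal L hL0, dist_eq_norm, dist_eq_norm]
    exact hKty x y y'
  -- the path-field is Lipschitz
  have hKlip : ∀ (x x' : Rd d) (σ : Hist τ d), ‖K x σ - K x' σ‖ ≤ L * ‖x - x'‖ := by
    intro x x' σ
    rw [hKdef, hKdef]
    have hint : ∀ z : Rd d, Integrable (fun s : Set.Icc (-τ) (0:ℝ) => Kt z (σ s)) ρ :=
      fun z => cont_integrable ((hKtc z).comp σ.continuous) ρ
    rw [← integral_sub (hint x) (hint x')]
    calc ‖∫ s, (Kt x (σ s) - Kt x' (σ s)) ∂ρ‖ ≤ ∫ _, L * ‖x - x'‖ ∂ρ :=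
        norm_integral_le_of_norm_le (integrable_const _) (ae_of_all _ fun s => hKtx x x' (σ s))
      _ = L * ‖x - x'‖ := by simp
  -- the mean-field force is Lipschitz, hence `Tf` is Lipschitz
  have hFlip : ∀ t : ℝ, 0 ≤ t → ∀ x x' : Rd d,
      ‖(∫ σ, K x σ ∂ (μ t)) - ∫ σ, K x' σ ∂ (μ t)‖ ≤ L * ‖x - x'‖ := by
    intro t ht x x'
    haveI := hμprob t
    rw [← integral_sub (hKint t x) (hKint t x')]
    calc ‖∫ σ, (K x σ - K x' σ) ∂ (μ t)‖ ≤ ∫ _, L * ‖x - x'‖ ∂ (μ t) :=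
        norm_integral_le_of_norm_le (integrable_const _) (ae_of_all _ fun σ => hKlip x x' σ)
      _ = L * ‖x - x'‖ := by haveI := hμprob t; simp
  have TfLip : ∀ t : ℝ, 0 ≤ t → ∀ x y, ‖Tf t x - Tf t y‖ ≤ Real.exp (L * t) * ‖x - y‖ :=
    flow_lip_s19 (v := fun t x => ∫ σ, K x σ ∂ (μ t)) hFlip hTf0 hTfD
  have TfCont : ∀ x, ContinuousOn (fun r => Tf r x) (Ici (0:ℝ)) :=
    fun x r hr => (hTfD x r hr).continuousWithinAt
  have Tfmeas : ∀ u : ℝ, 0 ≤ u → Measurable (Tf u) := by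
    intro u hu
    refine (LipschitzWith.of_dist_le_mul (K := (Real.exp (L * u)).toNNReal)
      (fun y y' => ?_)).continuous.measurable
    rw [Real.coe_toNNReal _ (Real.exp_nonneg _), dist_eq_norm, dist_eq_norm]
    exact TfLip u hu y y'
  -- the evaluation identity : ev s # μ(t) = μ̃(t+s)
  have mapeval : ∀ t : ℝ, 0 ≤ t → ∀ s : Set.Icc (-τ) (0:ℝ),
      (μ t).map (fun σ : Hist τ d => σ s) = μt (t + (s:ℝ)) := by
    intro t ht s
    have hs1 : -τ ≤ t + (s:ℝ) := by have := s.2.1; linarith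
    rw [hfix t ht, Measure.map_map (evm s) (hGmeas t)]
    rcases le_or_gt (t + (s:ℝ)) 0 with h | h
    · have hfun : ((fun σ : Hist τ d => σ s) ∘ G t)
          = fun σ : Hist τ d => σ (⟨t + (s:ℝ), ⟨hs1, h⟩⟩ : Set.Icc (-τ) (0:ℝ)) := by
        funext σ
        exact (hres t ht σ s).1 ⟨t + (s:ℝ), ⟨hs1, h⟩⟩ rfl
      rw [hfun]
      have := hμtneg ⟨t + (s:ℝ), ⟨hs1, h⟩⟩
      rw [hμ0] at this
      exact this.symm
    · have hfun : ((fun σ : Hist τ d => σ s) ∘ G t)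
          = fun σ : Hist τ d => Tf (t + (s:ℝ)) (σ z0) := by
        funext σ
        exact (hres t ht σ s).2 h z0 hz0c
      rw [hfun]
      have h2 := hμt0 (t + (s:ℝ)) h.le z0 hz0c
      rw [hfix (t + (s:ℝ)) h.le, Measure.map_map (evm z0) (hGmeas _)] at h2
      have hfun2 : ((fun σ : Hist τ d => σ z0) ∘ G (t + (s:ℝ)))
          = fun σ : Hist τ d => Tf (t + (s:ℝ)) (σ z0) := by
        funext σ
        show (G (t + (s:ℝ)) σ) z0 = Tf (t + (s:ℝ)) (σ z0)
        rw [(hres (t + (s:ℝ)) h.le σ z0).2 (by rw [hz0c]; linarith) z0 hz0c, hz0c, add_zero]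
      rw [hfun2] at h2
      exact h2.symm
  -- support bound for μ(t)
  have μsupp : ∀ t : ℝ, 0 ≤ t → ∃ R : ℝ, 0 ≤ R ∧ (μ t) {σ : Hist τ d | ¬ ‖σ‖ ≤ R} = 0 := by
    intro t ht
    obtain ⟨C, hC⟩ := (isCompact_Icc (a := (0:ℝ)) (b := t)).exists_bound_of_continuousOn
      ((TfCont 0).mono Icc_subset_Ici_self)
    have hC0 : 0 ≤ C := (norm_nonneg _).trans (hC 0 ⟨le_rfl, ht⟩)
    refine ⟨max R₀ (C + Real.exp (L * t) * R₀), le_max_of_le_left hR.le, ?_⟩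
    set R := max R₀ (C + Real.exp (L * t) * R₀) with hRdef
    have hRnn : 0 ≤ R := le_max_of_le_left hR.le
    have hms : MeasurableSet {σ : Hist τ d | ¬ ‖σ‖ ≤ R} :=
      (isClosed_le continuous_norm continuous_const).measurableSet.compl
    rw [hfix t ht, Measure.map_apply (hGmeas t) hms]
    refine measure_mono_null (fun σ hσ => ?_) hsupp
    simp only [mem_preimage, mem_setOf_eq] at hσ
    simp only [mem_compl_iff, Metric.mem_closedBall, dist_zero_right, not_le]
    by_contra hcon
    push_neg at hcon
    apply hσ
    refine ((G t σ).norm_le hRnn).mpr (fun s => ?_)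
    rcases le_or_gt (t + (s:ℝ)) 0 with h | h
    · have hs1 : -τ ≤ t + (s:ℝ) := by have := s.2.1; linarith
      rw [(hres t ht σ s).1 ⟨t + (s:ℝ), ⟨hs1, h⟩⟩ rfl]
      exact le_max_of_le_left ((σ.norm_coe_le_norm _).trans hcon)
    · rw [(hres t ht σ s).2 h z0 hz0c]
      refine le_max_of_le_right ?_
      have hts : t + (s:ℝ) ≤ t := by have := s.2.2; linarith
      calc ‖Tf (t + (s:ℝ)) (σ z0)‖
          = ‖Tf (t + (s:ℝ)) 0 + (Tf (t + (s:ℝ)) (σ z0) - Tf (t + (s:ℝ)) 0)‖ := by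
            rw [add_sub_cancel]
        _ ≤ ‖Tf (t + (s:ℝ)) 0‖ + ‖Tf (t + (s:ℝ)) (σ z0) - Tf (t + (s:ℝ)) 0‖ := norm_add_le _ _
        _ ≤ C + Real.exp (L * t) * R₀ := by
            refine add_le_add (hC _ ⟨h.le, hts⟩) ?_
            have h1 := TfLip (t + (s:ℝ)) h.le (σ z0) 0
            rw [sub_zero] at h1
            refine h1.trans ?_
            have h2 : ‖σ z0‖ ≤ R₀ := (σ.norm_coe_le_norm _).trans hcon
            exact mul_le_mul (Real.exp_le_exp.mpr (by nlinarith)) h2 (norm_nonneg _)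
              (Real.exp_nonneg _)
  -- Fubini : part 1
  have part1 : ∀ t : ℝ, 0 ≤ t → ∀ x : Rd d,
      ∫ σ, K x σ ∂(μ t)
        = ∫ s : Set.Icc (-τ) (0:ℝ), (∫ y, Kt x y ∂(μt (t + (s:ℝ)))) ∂ρ := by
    intro t ht x
    haveI := hμprob t
    obtain ⟨R, hRnn, hRsupp⟩ := μsupp t ht
    have hmeasP : AEStronglyMeasurable
        (Function.uncurry (fun (σ : Hist τ d) (s : Set.Icc (-τ) (0:ℝ)) => Kt x (σ s)))
        ((μ t).prod ρ) := by
      have hunc : StronglyMeasurable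
          (Function.uncurry (fun (s : Set.Icc (-τ) (0:ℝ)) (σ : Hist τ d) => Kt x (σ s))) :=
        stronglyMeasurable_uncurry_of_continuous_of_stronglyMeasurable
          (fun σ => (hKtc x).comp σ.continuous)
          (fun s => ((hKtc x).measurable.comp (evm s)).stronglyMeasurable)
      exact (hunc.comp_measurable measurable_swap).aestronglyMeasurable
    have haeP : ∀ᵐ p ∂ ((μ t).prod ρ), ‖(p.1 : Hist τ d)‖ ≤ R := by
      rw [ae_iff]
      have hset : {p : Hist τ d × Set.Icc (-τ) (0:ℝ) | ¬ ‖p.1‖ ≤ R}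
          = {σ : Hist τ d | ¬ ‖σ‖ ≤ R} ×ˢ univ := by
        ext p; simp [Set.mem_prod]
      rw [hset, Measure.prod_prod, hRsupp, zero_mul]
    have hintP : Integrable
        (Function.uncurry (fun (σ : Hist τ d) (s : Set.Icc (-τ) (0:ℝ)) => Kt x (σ s)))
        ((μ t).prod ρ) := by
      refine (integrable_const (‖Kt x 0‖ + L * R)).mono' hmeasP ?_
      filter_upwards [haeP] with p hp
      calc ‖Kt x (p.1 p.2)‖ = ‖Kt x 0 + (Kt x (p.1 p.2) - Kt x 0)‖ := by rw [add_sub_cancel]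
        _ ≤ ‖Kt x 0‖ + ‖Kt x (p.1 p.2) - Kt x 0‖ := norm_add_le _ _
        _ ≤ ‖Kt x 0‖ + L * ‖p.1 p.2 - 0‖ := by gcongr; exact hKty x _ 0
        _ ≤ ‖Kt x 0‖ + L * R := by
            rw [sub_zero]
            gcongr
            exact (p.1.norm_coe_le_norm p.2).trans hp
    calc ∫ σ, K x σ ∂(μ t)
        = ∫ σ, ∫ s : Set.Icc (-τ) (0:ℝ), Kt x (σ s) ∂ρ ∂(μ t) := by
          exact integral_congr_ae (ae_of_all _ fun σ => hKdef x σ)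
      _ = ∫ s : Set.Icc (-τ) (0:ℝ), ∫ σ, Kt x (σ s) ∂(μ t) ∂ρ := integral_integral_swap hintP
      _ = ∫ s : Set.Icc (-τ) (0:ℝ), (∫ y, Kt x y ∂(μt (t + (s:ℝ)))) ∂ρ := by
          refine integral_congr_ae (ae_of_all _ fun s => ?_)
          show (∫ σ, Kt x (σ s) ∂(μ t)) = ∫ y, Kt x y ∂(μt (t + (s:ℝ)))
          rw [← mapeval t ht s, integral_map (evm s).aemeasurable (hKtc x).aestronglyMeasurable]
  -- μt family facts
  have μtneg : ∀ s : Set.Icc (-τ) (0:ℝ), μt (s:ℝ) = μin.map (fun σ : Hist τ d => σ s) :=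
    fun s => by rw [hμtneg s, hμ0]
  have hμt0R : μt 0 = μin.map (fun σ : Hist τ d => σ z0) := by
    have := μtneg z0; rwa [hz0c] at this
  have μtmapTf : ∀ u : ℝ, 0 ≤ u → μt u = (μt 0).map (Tf u) := by
    intro u hu
    rcases eq_or_lt_of_le hu with h | h
    · rw [← h]
      have hid : Tf 0 = fun x : Rd d => x := funext hTf0
      rw [hid]
      exact Measure.map_id.symm
    · rw [hμt0 u hu z0 hz0c, hfix u hu, Measure.map_map (evm z0) (hGmeas u)]
      have hfun : ((fun σ : Hist τ d => σ z0) ∘ G u) = fun σ : Hist τ d => Tf u (σ z0) := by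
        funext σ
        show (G u σ) z0 = Tf u (σ z0)
        rw [(hres u hu σ z0).2 (by rw [hz0c]; linarith) z0 hz0c, hz0c, add_zero]
      rw [hfun, hμt0R, Measure.map_map (Tfmeas u hu) (evm z0)]
      rfl
  set Th : ℝ → Rd d → Rd d := fun u => Tf (max u 0) with hThdef
  have Theq : ∀ u : ℝ, 0 ≤ u → Th u = Tf u := fun u hu => by
    rw [hThdef]; simp [max_eq_left hu]
  have Thmeas : ∀ u, Measurable (Th u) := fun u => Tfmeas _ (le_max_right _ _)
  have Th0 : ∀ x, Th 0 x = x := fun x => by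
    rw [show Th 0 = Tf 0 from Theq 0 le_rfl]; exact hTf0 x
  have Thcont : ∀ x, ContinuousOn (fun r => Th r x) (Ici (0:ℝ)) := by
    intro x
    apply (TfCont x).congr
    intro r hr
    simp only [hThdef, max_eq_left (mem_Ici.mp hr)]
  have μtmapTh : ∀ u : ℝ, 0 ≤ u → μt u = (μt 0).map (Th u) := fun u hu => by
    rw [Theq u hu]; exact μtmapTf u hu
  have ThLip : ∀ u : ℝ, 0 ≤ u → ∀ x y : Rd d, ‖Th u x - Th u y‖ ≤ Real.exp (L*u) * ‖x - y‖ :=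
    fun u hu x y => by rw [Theq u hu]; exact TfLip u hu x y
  have measμt : ∀ t : ℝ, 0 ≤ t → ∀ x, StronglyMeasurable
      (fun s : Set.Icc (-τ) (0:ℝ) => ∫ z, Kt x z ∂ (μt (t + s))) :=
    fun t ht x => fam_meas τ Kt hKtc Th h0 μin μt μtneg μtmapTh Thmeas Th0 Thcont t ht x
  have TfD2 : ∀ x, ∀ t : ℝ, 0 ≤ t → HasDerivWithinAt (fun r => Tf r x)
      (∫ s : Set.Icc (-τ) (0:ℝ), (∫ y, Kt (Tf t x) y ∂(μt (t + (s:ℝ)))) ∂ρ) (Ici (0:ℝ)) t := by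
    intro x t ht
    rw [← part1 t ht (Tf t x)]
    exact hTfD x t ht
  refine ⟨part1, ⟨Th, Th0, ?_, Thmeas, μtmapTh⟩, ?_⟩
  · intro x t ht
    have hval : Th t x = Tf t x := by rw [Theq t ht]
    rw [hval]
    exact (TfD2 x t ht).congr (fun r hr => by rw [Theq r hr]) (by rw [Theq t ht])
  · intro ν S' hνp hνi hνinit hS'0 hS'd hS'm hνmap
    have hν0 : ν 0 = μt 0 := by have := hνinit z0; rwa [hz0c] at this
    have hνneg : ∀ s : Set.Icc (-τ) (0:ℝ), ν (s:ℝ) = μin.map (fun σ : Hist τ d => σ s) :=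
      fun s => by rw [hνinit s, μtneg s]
    have hS'cont : ∀ x, ContinuousOn (fun r => S' r x) (Ici (0:ℝ)) :=
      fun x r hr => (hS'd x r hr).continuousWithinAt
    have measν : ∀ t : ℝ, 0 ≤ t → ∀ x, StronglyMeasurable
        (fun s : Set.Icc (-τ) (0:ℝ) => ∫ z, Kt x z ∂ (ν (t + s))) :=
      fun t ht x => fam_meas τ Kt hKtc S' h0 μin ν hνneg hνmap hS'm hS'0 hS'cont t ht x
    have νlipfield : ∀ t : ℝ, 0 ≤ t → ∀ y y' : Rd d,
        ‖(∫ s : Set.Icc (-τ) (0:ℝ), (∫ z, Kt y z ∂ (ν (t + s))) ∂ρ)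
          - ∫ s : Set.Icc (-τ) (0:ℝ), (∫ z, Kt y' z ∂ (ν (t + s))) ∂ρ‖ ≤ L * ‖y - y'‖ :=
      fun t ht y y' => fam_lip_weak hL0 hKtx hνp hνi t (fun x => measν t ht x) y y'
    have S'Lip : ∀ u : ℝ, 0 ≤ u → ∀ x y : Rd d,
        ‖S' u x - S' u y‖ ≤ Real.exp (L*u) * ‖x - y‖ :=
      flow_lip_s19 (v := fun t y => ∫ s : Set.Icc (-τ) (0:ℝ), (∫ z, Kt y z ∂ (ν (t + s))) ∂ρ)
        νlipfield hS'0 hS'd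
    have μtlipfield : ∀ t : ℝ, 0 ≤ t → ∀ y y' : Rd d,
        ‖(∫ s : Set.Icc (-τ) (0:ℝ), (∫ z, Kt y z ∂ (μt (t + s))) ∂ρ)
          - ∫ s : Set.Icc (-τ) (0:ℝ), (∫ z, Kt y' z ∂ (μt (t + s))) ∂ρ‖ ≤ L * ‖y - y'‖ :=
      fun t ht y y' => fam_lip_weak hL0 hKtx hμtp hμti t (fun x => measμt t ht x) y y'
    have intν : ∀ r : ℝ, 0 ≤ r → ∀ y, Integrable
        (fun s : Set.Icc (-τ) (0:ℝ) => ∫ z, Kt y z ∂ν (r + s)) ρ := by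
      intro r hr y
      obtain ⟨Rm, hRm0, hRm⟩ := fam_supp h0 hL0 hR.le hνneg hνmap hS'm hS'cont S'Lip hsupp r hr
      exact fam_int hL0 hKty hνp hr hRm y (measν r hr y)
    have intμt : ∀ r : ℝ, 0 ≤ r → ∀ y, Integrable
        (fun s : Set.Icc (-τ) (0:ℝ) => ∫ z, Kt y z ∂μt (r + s)) ρ := by
      intro r hr y
      obtain ⟨Rm, hRm0, hRm⟩ := fam_supp h0 hL0 hR.le μtneg μtmapTh Thmeas Thcont ThLip hsupp r hr
      exact fam_int hL0 hKty hμtp hr hRm y (measμt r hr y)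
    have hinμ : ∀ᵐ σ ∂μin, ‖σ‖ ≤ R₀ := by
      rw [ae_iff]
      have hset : {σ : Hist τ d | ¬ ‖σ‖ ≤ R₀} = (Metric.closedBall (0 : Hist τ d) R₀)ᶜ := by
        ext σ; simp [Metric.mem_closedBall, dist_zero_right]
      rw [hset]; exact hsupp
    have haeν0 : ∀ᵐ p ∂ (ν 0), ‖p‖ ≤ R₀ := by
      rw [hν0, hμt0R, ae_map_iff (evm z0).aemeasurable
        (isClosed_le continuous_norm continuous_const).measurableSet]
      filter_upwards [hinμ] with σ hσ
      exact (σ.norm_coe_le_norm _).trans hσ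
    set hstep : ℝ := Real.log 2 / (2*L) with hstepdef
    have hstep_pos : 0 < hstep := div_pos (Real.log_pos one_lt_two) (by linarith)
    have hLh : L * hstep = Real.log 2 / 2 := by rw [hstepdef]; field_simp
    have hcc : Real.exp (L * hstep) - 1 < 1 := by
      rw [hLh]
      have h2 : Real.exp (Real.log 2 / 2) < Real.exp (Real.log 2) :=
        Real.exp_lt_exp.mpr (by linarith [Real.log_pos one_lt_two])
      rw [Real.exp_log two_pos] at h2
      linarith
    have hc0 : 0 ≤ Real.exp (L * hstep) - 1 := by
      have := Real.one_le_exp (by positivity : 0 ≤ L * hstep)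
      linarith
    have main : ∀ n : ℕ, ∀ r ∈ Icc (0:ℝ) ((n:ℝ) * hstep),
        (∀ x ∈ Metric.closedBall (0:Rd d) R₀, S' r x = Tf r x) ∧ ν r = μt r := by
      intro n
      induction n with
      | zero =>
        intro r hr
        have hr0 : r = 0 := le_antisymm (by simpa using hr.2) hr.1
        subst hr0
        exact ⟨fun x _ => by rw [hS'0, hTf0], hν0⟩
      | succ n ih =>
        set a : ℝ := (n:ℝ) * hstep with hadef
        set b : ℝ := ((n + 1 : ℕ) : ℝ) * hstep with hbdef
        have ha0 : 0 ≤ a := by positivity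
        have hab : b = a + hstep := by rw [hadef, hbdef]; push_cast; ring
        have hb0 : 0 ≤ b := by rw [hab]; positivity
        have hS'a : ∀ x ∈ Metric.closedBall (0:Rd d) R₀, S' a x = Tf a x :=
          fun x hx => (ih a ⟨ha0, le_rfl⟩).1 x hx
        obtain ⟨CS, hCS⟩ := (isCompact_Icc (a := (0:ℝ)) (b := b)).exists_bound_of_continuousOn
          ((hS'cont 0).mono Icc_subset_Ici_self)
        obtain ⟨CT, hCT⟩ := (isCompact_Icc (a := (0:ℝ)) (b := b)).exists_bound_of_continuousOn
          ((TfCont 0).mono Icc_subset_Ici_self)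
        set ES : Set ℝ := (fun p : ℝ × Rd d => ‖S' p.1 p.2 - Tf p.1 p.2‖) ''
          (Icc (0:ℝ) b ×ˢ Metric.closedBall (0:Rd d) R₀) with hESdef
        have hES_ne : ES.Nonempty :=
          ⟨_, ⟨(0, 0), ⟨⟨le_rfl, hb0⟩, Metric.mem_closedBall_self hR.le⟩, rfl⟩⟩
        have flowbound : ∀ (Sf : ℝ → Rd d → Rd d) (CC : ℝ),
            (∀ r ∈ Icc (0:ℝ) b, ‖Sf r 0‖ ≤ CC) →
            (∀ u : ℝ, 0 ≤ u → ∀ x y : Rd d, ‖Sf u x - Sf u y‖ ≤ Real.exp (L*u) * ‖x - y‖) →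
            ∀ r ∈ Icc (0:ℝ) b, ∀ x ∈ Metric.closedBall (0:Rd d) R₀,
              ‖Sf r x‖ ≤ CC + Real.exp (L*b) * R₀ := by
          intro Sf CC hCC hLip r hr x hx
          have hx' : ‖x‖ ≤ R₀ := by rwa [Metric.mem_closedBall, dist_zero_right] at hx
          calc ‖Sf r x‖ = ‖Sf r 0 + (Sf r x - Sf r 0)‖ := by rw [add_sub_cancel]
            _ ≤ ‖Sf r 0‖ + ‖Sf r x - Sf r 0‖ := norm_add_le _ _
            _ ≤ CC + Real.exp (L*b) * R₀ := by
                refine add_le_add (hCC r hr) ?_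
                have h1 := hLip r hr.1 x 0
                rw [sub_zero] at h1
                exact h1.trans (mul_le_mul (Real.exp_le_exp.mpr
                  (by nlinarith [hr.2, hr.1])) hx' (norm_nonneg _) (Real.exp_nonneg _))
        have hES_bdd : BddAbove ES := by
          refine ⟨(CS + Real.exp (L*b) * R₀) + (CT + Real.exp (L*b) * R₀), ?_⟩
          rintro w ⟨⟨r, x⟩, ⟨hr, hx⟩, rfl⟩
          calc ‖S' r x - Tf r x‖ ≤ ‖S' r x‖ + ‖Tf r x‖ := norm_sub_le _ _
            _ ≤ _ := add_le_add (flowbound S' CS hCS S'Lip r hr x hx)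
                (flowbound Tf CT hCT TfLip r hr x hx)
        set E : ℝ := sSup ES with hEdef
        have hE0 : 0 ≤ E := by
          refine le_csSup hES_bdd ?_
          refine ⟨(0, 0), ⟨⟨le_rfl, hb0⟩, Metric.mem_closedBall_self hR.le⟩, ?_⟩
          simp [hS'0, hTf0]
        have hEmem : ∀ r ∈ Icc (0:ℝ) b, ∀ x ∈ Metric.closedBall (0:Rd d) R₀,
            ‖S' r x - Tf r x‖ ≤ E :=
          fun r hr x hx => le_csSup hES_bdd ⟨(r, x), ⟨hr, hx⟩, rfl⟩
        have hfield : ∀ r ∈ Icc (0:ℝ) b, ∀ y : Rd d,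
            ‖(∫ s : Set.Icc (-τ) (0:ℝ), (∫ z, Kt y z ∂ (ν (r + s))) ∂ρ)
              - ∫ s : Set.Icc (-τ) (0:ℝ), (∫ z, Kt y z ∂ (μt (r + s))) ∂ρ‖ ≤ L * E := by
          intro r hr y
          haveI := hνp 0
          rw [← integral_sub (intν r hr.1 y) (intμt r hr.1 y)]
          refine (norm_integral_le_of_norm_le (integrable_const (L*E))
            (ae_of_all _ fun s => ?_)).trans (by simp)
          rcases le_or_gt (r + (s:ℝ)) 0 with hu | hu
          · have hs1 : -τ ≤ r + (s:ℝ) := by have := s.2.1; linarith [hr.1]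
            have heq : ν (r + (s:ℝ)) = μt (r + (s:ℝ)) := hνinit ⟨r + (s:ℝ), ⟨hs1, hu⟩⟩
            rw [heq, sub_self, norm_zero]
            positivity
          · have hub : r + (s:ℝ) ≤ b := by have := s.2.2; linarith [hr.2]
            have hν' : Integrable (fun p => Kt y (S' (r + (s:ℝ)) p)) (ν 0) := by
              have h3 := hνi (r + (s:ℝ)) y
              rw [hνmap _ hu.le] at h3
              exact (integrable_map_measure (hKtc y).aestronglyMeasurable
                (hS'm _).aemeasurable).mp h3
            have hμ' : Integrable (fun p => Kt y (Tf (r + (s:ℝ)) p)) (ν 0) := by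
              have h3 := hμti (r + (s:ℝ)) y
              rw [μtmapTf _ hu.le, ← hν0] at h3
              exact (integrable_map_measure (hKtc y).aestronglyMeasurable
                (Tfmeas _ hu.le).aemeasurable).mp h3
            rw [hνmap _ hu.le, μtmapTf _ hu.le, ← hν0,
              integral_map (hS'm _).aemeasurable (hKtc y).aestronglyMeasurable,
              integral_map (Tfmeas _ hu.le).aemeasurable (hKtc y).aestronglyMeasurable,
              ← integral_sub hν' hμ']
            refine (norm_integral_le_of_norm_le (integrable_const (L*E)) ?_).trans (by simp)
            filter_upwards [haeν0] with p hp
            refine (hKty y _ _).trans ?_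
            have hpball : p ∈ Metric.closedBall (0:Rd d) R₀ := by
              rwa [Metric.mem_closedBall, dist_zero_right]
            exact mul_le_mul_of_nonneg_left (hEmem _ ⟨hu.le, hub⟩ p hpball) hL0
        have hcomp : ∀ x ∈ Metric.closedBall (0:Rd d) R₀, ∀ r ∈ Icc a b,
            ‖S' r x - Tf r x‖ ≤ E * (Real.exp (L * hstep) - 1) := by
          intro x hx r hr
          have hbound : ∀ u ∈ Ico a b,
              ‖(∫ s : Set.Icc (-τ) (0:ℝ), (∫ z, Kt (S' u x) z ∂ν (u + s)) ∂ρ)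
                - ∫ s : Set.Icc (-τ) (0:ℝ), (∫ z, Kt (Tf u x) z ∂μt (u + s)) ∂ρ‖
                ≤ L * ‖S' u x - Tf u x‖ + L * E := by
            intro u hu
            have hu0 : 0 ≤ u := ha0.trans hu.1
            have h1 := hfield u ⟨hu0, hu.2.le⟩ (S' u x)
            have h2 := μtlipfield u hu0 (S' u x) (Tf u x)
            have h3 := norm_add_le
              ((∫ s : Set.Icc (-τ) (0:ℝ), (∫ z, Kt (S' u x) z ∂ν (u + s)) ∂ρ)
                - ∫ s : Set.Icc (-τ) (0:ℝ), (∫ z, Kt (S' u x) z ∂μt (u + s)) ∂ρ)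
              ((∫ s : Set.Icc (-τ) (0:ℝ), (∫ z, Kt (S' u x) z ∂μt (u + s)) ∂ρ)
                - ∫ s : Set.Icc (-τ) (0:ℝ), (∫ z, Kt (Tf u x) z ∂μt (u + s)) ∂ρ)
            rw [sub_add_sub_cancel] at h3
            refine h3.trans ?_
            linarith
          have hgr := myGron (a := a) (b := b) (δ := 0) (ε := L * E) (L := L) ha0
            (f := fun u => S' u x - Tf u x)
            (F := fun u => (∫ s : Set.Icc (-τ) (0:ℝ), (∫ z, Kt (S' u x) z ∂ν (u + s)) ∂ρ)
              - ∫ s : Set.Icc (-τ) (0:ℝ), (∫ z, Kt (Tf u x) z ∂μt (u + s)) ∂ρ)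
            (fun u hu => (hS'd x u hu).sub (TfD2 x u hu))
            (by show ‖S' a x - Tf a x‖ ≤ (0:ℝ)
                rw [hS'a x hx, sub_self, norm_zero])
            hbound r hr
          rw [gronwallBound_of_K_ne_0 hL.ne'] at hgr
          simp only [zero_mul, zero_add] at hgr
          have hLE : L * E / L = E := by field_simp
          rw [hLE] at hgr
          refine hgr.trans ?_
          have hra : r - a ≤ hstep := by rw [hab] at hr; linarith [hr.2]
          have hmon : Real.exp (L*(r-a)) - 1 ≤ Real.exp (L*hstep) - 1 := by
            have := Real.exp_le_exp.mpr (mul_le_mul_of_nonneg_left hra hL0)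
            linarith
          exact mul_le_mul_of_nonneg_left hmon hE0
        have hEc : E ≤ E * (Real.exp (L*hstep) - 1) := by
          refine csSup_le hES_ne ?_
          rintro w ⟨⟨r, x⟩, ⟨hr, hx⟩, rfl⟩
          rcases le_or_gt r a with hra | hra
          · have heq := (ih r ⟨hr.1, hra⟩).1 x hx
            simp only [heq, sub_self, norm_zero]
            exact mul_nonneg hE0 hc0
          · exact hcomp x hx r ⟨hra.le, hr.2⟩
        have hE : E = 0 := by nlinarith
        intro r hr
        have hflow : ∀ x ∈ Metric.closedBall (0:Rd d) R₀, S' r x = Tf r x := by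
          intro x hx
          have h1 := hEmem r hr x hx
          rw [hE] at h1
          exact sub_eq_zero.mp (norm_le_zero_iff.mp h1)
        refine ⟨hflow, ?_⟩
        rw [hνmap r hr.1, μtmapTf r hr.1, ← hν0]
        apply Measure.map_congr
        filter_upwards [haeν0] with p hp
        exact hflow p (by rwa [Metric.mem_closedBall, dist_zero_right])
    intro t ht
    obtain ⟨n, hn⟩ := exists_nat_ge (t / hstep)
    have htn : t ≤ (n:ℝ) * hstep := by rw [div_le_iff₀ hstep_pos] at hn; linarith
    exact (main n t ⟨ht, htn⟩).2
end
end
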